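/- arXiv:0912.3136 — 7 statements merged into one kernel-verified Lean document; each statement's English description precedes it below -/
import Mathlib

section
/- Let u=(g₁,h₁) and v=(g₂,h₂) be vertices of G ⊠ H with d_{G⊠H}(u,v) = d_G(g₁,g₂). Then the closed interval I[u,v] equals { (g,h) : g ∈ I[g₁,g₂], d_H(h₁,h) ≤ d_G(g₁,g), and d_H(h,h₂) ≤ d_G(g,g₂) }. -/
open SimpleGraph

/-- The strong product of two simple graphs. -/
def strongProd {α β : Type*} (G : SimpleGraph α) (H : SimpleGraph β) :
    SimpleGraph (α × β) where
  Adj x y := x ≠ y ∧ (x.1 = y.1 ∨ G.Adj x.1 y.1) ∧ (x.2 = y.2 ∨ H.Adj x.2 y.2)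
  symm := by
    constructor
    rintro x y ⟨hne, h1, h2⟩
    exact ⟨hne.symm, h1.imp Eq.symm G.adj_symm, h2.imp Eq.symm H.adj_symm⟩
  loopless := by constructor; rintro x ⟨hne, -, -⟩; exact hne rfl

/-- The closed geodesic interval between two vertices. -/
def interval {V : Type*} (G : SimpleGraph V) (u v : V) : Set V :=
  {w | G.dist u w + G.dist w v = G.dist u v}

/-- The geodetic closure of a set of vertices. -/
def intervalSet {V : Type*} (G : SimpleGraph V) (S : Set V) : Set V :=
  ⋃ u ∈ S, ⋃ v ∈ S, interval G u v

/-- A set is geodetic if its geodetic closure is the whole vertex set. -/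
def IsGeodetic {V : Type*} (G : SimpleGraph V) (S : Set V) : Prop :=
  intervalSet G S = Set.univ

/-- A set is a hull set if iterating the interval operator yields everything. -/
def IsHullSet {V : Type*} (G : SimpleGraph V) (S : Set V) : Prop :=
  ∃ r : ℕ, (intervalSet G)^[r] S = Set.univ

/-- The geodetic number. -/
noncomputable def geodeticNumber {V : Type*} (G : SimpleGraph V) : ℕ :=
  sInf {n : ℕ | ∃ S : Set V, S.ncard = n ∧ IsGeodetic G S}

/-- The hull number. -/
noncomputable def hullNumber {V : Type*} (G : SimpleGraph V) : ℕ :=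
  sInf {n : ℕ | ∃ S : Set V, S.ncard = n ∧ IsHullSet G S}

/-- A vertex is simplicial if its neighborhood induces a complete graph. -/
def IsSimplicial {V : Type*} (G : SimpleGraph V) (v : V) : Prop :=
  ∀ ⦃a b : V⦄, G.Adj v a → G.Adj v b → a ≠ b → G.Adj a b

section Aux

variable {α β : Type*} {G : SimpleGraph α} {H : SimpleGraph β}

lemma strongProd_proj_fst :
    ∀ {x y : α × β} (w : (strongProd G H).Walk x y),
      ∃ p : G.Walk x.1 y.1, p.length ≤ w.length := by
  intro x y w
  induction w with
  | nil => exact ⟨SimpleGraph.Walk.nil, le_rfl⟩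
  | cons h w ih =>
    obtain ⟨p, hp⟩ := ih
    obtain ⟨-, h1, -⟩ := h
    rcases h1 with he | ha
    · exact ⟨p.copy he.symm rfl, by rw [SimpleGraph.Walk.length_copy]; exact hp.trans (Nat.le_succ _)⟩
    · exact ⟨SimpleGraph.Walk.cons ha p, Nat.succ_le_succ hp⟩

lemma strongProd_proj_snd :
    ∀ {x y : α × β} (w : (strongProd G H).Walk x y),
      ∃ p : H.Walk x.2 y.2, p.length ≤ w.length := by
  intro x y w
  induction w with
  | nil => exact ⟨SimpleGraph.Walk.nil, le_rfl⟩
  | cons h w ih =>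
    obtain ⟨p, hp⟩ := ih
    obtain ⟨-, -, h2⟩ := h
    rcases h2 with he | ha
    · exact ⟨p.copy he.symm rfl, by rw [SimpleGraph.Walk.length_copy]; exact hp.trans (Nat.le_succ _)⟩
    · exact ⟨SimpleGraph.Walk.cons ha p, Nat.succ_le_succ hp⟩

/-- Embedding `g ↦ (g, h)` as a graph homomorphism. -/
def toProdHomFst (h : β) : G →g strongProd G H where
  toFun g := (g, h)
  map_rel' := fun ha => ⟨fun he => ha.ne (congrArg Prod.fst he), Or.inr ha, Or.inl rfl⟩

/-- Embedding `h ↦ (g, h)` as a graph homomorphism. -/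
def toProdHomSnd (g : α) : H →g strongProd G H where
  toFun h := (g, h)
  map_rel' := fun ha => ⟨fun he => ha.ne (congrArg Prod.snd he), Or.inl rfl, Or.inr ha⟩

lemma strongProd_lift_fst :
    ∀ {g g' : α} {h h' : β} (p : G.Walk g g') (q : H.Walk h h'),
      q.length ≤ p.length →
      ∃ w : (strongProd G H).Walk (g, h) (g', h'), w.length = p.length := by
  intro g g' h h' p
  induction p generalizing h with
  | nil =>
    intro q hq
    have : h = h' := q.eq_of_length_eq_zero (Nat.le_zero.mp hq)
    subst this
    exact ⟨SimpleGraph.Walk.nil, rfl⟩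
  | @cons a b c hadj p ih =>
    intro q hq
    cases q with
    | nil =>
      refine ⟨(SimpleGraph.Walk.cons hadj p).map (toProdHomFst _), ?_⟩
      simp [SimpleGraph.Walk.length_map, toProdHomFst]
    | @cons _ d _ hb q' =>
      obtain ⟨w, hw⟩ := ih q' (Nat.succ_le_succ_iff.mp (by simpa using hq))
      refine ⟨SimpleGraph.Walk.cons
        ⟨fun he => hadj.ne (congrArg Prod.fst he), Or.inr hadj, Or.inr hb⟩ w, ?_⟩
      simp [hw]
      exact congrArg (· + 1) hw

lemma strongProd_lift_snd :
    ∀ {g g' : α} {h h' : β} (q : H.Walk h h') (p : G.Walk g g'),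
      p.length ≤ q.length →
      ∃ w : (strongProd G H).Walk (g, h) (g', h'), w.length = q.length := by
  intro g g' h h' q
  induction q generalizing g with
  | nil =>
    intro p hp
    have : g = g' := p.eq_of_length_eq_zero (Nat.le_zero.mp hp)
    subst this
    exact ⟨SimpleGraph.Walk.nil, rfl⟩
  | @cons a b c hadj q ih =>
    intro p hp
    cases p with
    | nil =>
      refine ⟨(SimpleGraph.Walk.cons hadj q).map (toProdHomSnd _), ?_⟩
      simp [SimpleGraph.Walk.length_map, toProdHomSnd]
    | @cons _ d _ hb p' =>
      obtain ⟨w, hw⟩ := ih p' (Nat.succ_le_succ_iff.mp (by simpa using hp))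
      refine ⟨SimpleGraph.Walk.cons
        ⟨fun he => hadj.ne (congrArg Prod.snd he), Or.inr hb, Or.inr hadj⟩ w, ?_⟩
      simp [hw]
      exact congrArg (· + 1) hw

lemma strongProd_dist (hG : G.Connected) (hH : H.Connected)
    (g g' : α) (h h' : β) :
    (strongProd G H).dist (g, h) (g', h') = max (G.dist g g') (H.dist h h') := by
  obtain ⟨p, hp⟩ := (hG g g').exists_walk_length_eq_dist
  obtain ⟨q, hq⟩ := (hH h h').exists_walk_length_eq_dist
  have hub : (strongProd G H).dist (g, h) (g', h') ≤ max (G.dist g g') (H.dist h h') := by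
    rcases le_total q.length p.length with hle | hle
    · obtain ⟨w, hw⟩ := strongProd_lift_fst p q hle
      calc (strongProd G H).dist (g, h) (g', h') ≤ w.length := SimpleGraph.dist_le w
        _ = p.length := hw
        _ ≤ _ := by rw [hp]; exact le_max_left _ _
    · obtain ⟨w, hw⟩ := strongProd_lift_snd q p hle
      calc (strongProd G H).dist (g, h) (g', h') ≤ w.length := SimpleGraph.dist_le w
        _ = q.length := hw
        _ ≤ _ := by rw [hq]; exact le_max_right _ _
  refine le_antisymm hub ?_
  have hreach : (strongProd G H).Reachable (g, h) (g', h') := by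
    rcases le_total q.length p.length with hle | hle
    · obtain ⟨w, -⟩ := strongProd_lift_fst p q hle; exact ⟨w⟩
    · obtain ⟨w, -⟩ := strongProd_lift_snd q p hle; exact ⟨w⟩
  obtain ⟨w, hw⟩ := hreach.exists_walk_length_eq_dist
  obtain ⟨p1, hp1⟩ := strongProd_proj_fst w
  obtain ⟨q1, hq1⟩ := strongProd_proj_snd w
  refine max_le ?_ ?_
  · calc G.dist g g' ≤ p1.length := SimpleGraph.dist_le p1
      _ ≤ w.length := hp1
      _ = _ := hw
  · calc H.dist h h' ≤ q1.length := SimpleGraph.dist_le q1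
      _ ≤ w.length := hq1
      _ = _ := hw

end Aux

theorem strongProd_interval_eq {α β : Type*} [Fintype α] [Fintype β]
    (G : SimpleGraph α) (H : SimpleGraph β) (hG : G.Connected) (hH : H.Connected)
    (g₁ g₂ : α) (h₁ h₂ : β)
    (hd : (strongProd G H).dist (g₁, h₁) (g₂, h₂) = G.dist g₁ g₂) :
    interval (strongProd G H) (g₁, h₁) (g₂, h₂) =
      {p : α × β | p.1 ∈ interval G g₁ g₂ ∧
        H.dist h₁ p.2 ≤ G.dist g₁ p.1 ∧ H.dist p.2 h₂ ≤ G.dist p.1 g₂} := by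
  have hdd := strongProd_dist hG hH g₁ g₂ h₁ h₂
  rw [hd] at hdd
  have hle : H.dist h₁ h₂ ≤ G.dist g₁ g₂ := max_eq_left_iff.mp hdd.symm
  ext ⟨g, h⟩
  simp only [interval, Set.mem_setOf_eq]
  rw [strongProd_dist hG hH g₁ g h₁ h, strongProd_dist hG hH g g₂ h h₂, hd]
  have tri := hG.dist_triangle (u := g₁) (v := g) (w := g₂)
  constructor
  · intro hsum
    have h1 := le_max_left (G.dist g₁ g) (H.dist h₁ h)
    have h2 := le_max_right (G.dist g₁ g) (H.dist h₁ h)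
    have h3 := le_max_left (G.dist g g₂) (H.dist h h₂)
    have h4 := le_max_right (G.dist g g₂) (H.dist h h₂)
    have hc1 := max_choice (G.dist g₁ g) (H.dist h₁ h)
    have hc2 := max_choice (G.dist g g₂) (H.dist h h₂)
    refine ⟨?_, ?_, ?_⟩ <;> omega
  · rintro ⟨hsum, hb1, hb2⟩
    rw [max_eq_left hb1, max_eq_left hb2]
    exact hsum
end

section
/- Let g₁ ≠ g₂ be vertices of G and h₁, h₂, h₃ distinct vertices of H with h₃ ∉ I[h₁,h₂]. Then (g₂,h₃) ∉ I[(g₁,h₁),(g₁,h₂)] in G ⊠ H. -/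
open SimpleGraph

/-- Lift a walk in `H` to a walk in the strong product with fixed first coordinate. -/
def liftWalkH {α β : Type*} (G : SimpleGraph α) (H : SimpleGraph β) (g : α) :
    ∀ {h h' : β}, H.Walk h h' → (strongProd G H).Walk (g, h) (g, h')
  | _, _, SimpleGraph.Walk.nil => SimpleGraph.Walk.nil
  | _, _, @SimpleGraph.Walk.cons _ _ _ b _ hadj p =>
      SimpleGraph.Walk.cons
        (v := (g, b)) ⟨by simp [hadj.ne], Or.inl rfl, Or.inr hadj⟩ (liftWalkH G H g p)

lemma liftWalkH_length {α β : Type*} (G : SimpleGraph α) (H : SimpleGraph β) (g : α)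
    {h h' : β} (p : H.Walk h h') : (liftWalkH G H g p).length = p.length := by
  induction p with
  | nil => rfl
  | cons hadj p ih => exact congrArg (· + 1) ih

/-- Lift a walk in `G` similarly. -/
def liftWalkG {α β : Type*} (G : SimpleGraph α) (H : SimpleGraph β) (h : β) :
    ∀ {g g' : α}, G.Walk g g' → (strongProd G H).Walk (g, h) (g', h)
  | _, _, SimpleGraph.Walk.nil => SimpleGraph.Walk.nil
  | _, _, @SimpleGraph.Walk.cons _ _ _ b _ hadj p =>
      SimpleGraph.Walk.cons
        (v := (b, h)) ⟨by simp [hadj.ne], Or.inr hadj, Or.inl rfl⟩ (liftWalkG G H h p)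

lemma strongProd_connected {α β : Type*} {G : SimpleGraph α} {H : SimpleGraph β}
    [Nonempty α] [Nonempty β] (hG : G.Connected) (hH : H.Connected) :
    (strongProd G H).Connected := by
  rw [SimpleGraph.connected_iff]
  refine ⟨fun x y => ?_, inferInstance⟩
  obtain ⟨p⟩ := hG x.1 y.1
  obtain ⟨q⟩ := hH x.2 y.2
  exact ⟨((liftWalkG G H x.2 p).append (liftWalkH G H y.1 q)).copy (by simp) (by simp)⟩

lemma strongProd_dist_le {α β : Type*} {G : SimpleGraph α} {H : SimpleGraph β}
    (hH : H.Connected) (g : α) (h h' : β) :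
    (strongProd G H).dist (g, h) (g, h') ≤ H.dist h h' := by
  obtain ⟨p, hp⟩ := hH.exists_walk_length_eq_dist h h'
  calc (strongProd G H).dist (g, h) (g, h') ≤ (liftWalkH G H g p).length :=
        SimpleGraph.dist_le _
    _ = H.dist h h' := by rw [liftWalkH_length, hp]

lemma distH_le_walk_length {α β : Type*} {G : SimpleGraph α} {H : SimpleGraph β}
    (hH : H.Connected) {x y : α × β} (p : (strongProd G H).Walk x y) :
    H.dist x.2 y.2 ≤ p.length := by
  induction p with
  | nil => simp
  | @cons u v w hadj p ih =>
    have step : H.dist u.2 v.2 ≤ 1 := by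
      rcases hadj.2.2 with h | h
      · rw [h, SimpleGraph.dist_self]; exact Nat.zero_le 1
      · exact le_of_eq (SimpleGraph.dist_eq_one_iff_adj.mpr h)
    calc H.dist u.2 w.2 ≤ H.dist u.2 v.2 + H.dist v.2 w.2 := hH.dist_triangle
      _ ≤ 1 + p.length := Nat.add_le_add step ih
      _ = (SimpleGraph.Walk.cons hadj p).length := by simp [Nat.add_comm]

lemma distH_le_strongProd_dist {α β : Type*} {G : SimpleGraph α} {H : SimpleGraph β}
    (hG : G.Connected) (hH : H.Connected) (x y : α × β) :
    H.dist x.2 y.2 ≤ (strongProd G H).dist x y := by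
  have : Nonempty α := ⟨x.1⟩
  have : Nonempty β := ⟨x.2⟩
  obtain ⟨p, hp⟩ := (strongProd_connected hG hH).exists_walk_length_eq_dist x y
  exact hp ▸ distH_le_walk_length hH p

theorem strongProd_not_mem_interval_ii {α β : Type*} [Fintype α] [Fintype β]
    (G : SimpleGraph α) (H : SimpleGraph β) (hG : G.Connected) (hH : H.Connected)
    (g₁ g₂ : α) (h₁ h₂ h₃ : β) (hg : g₁ ≠ g₂)
    (h12 : h₁ ≠ h₂) (h13 : h₁ ≠ h₃) (h23 : h₂ ≠ h₃)
    (hmem : h₃ ∉ interval H h₁ h₂) :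
    (g₂, h₃) ∉ interval (strongProd G H) (g₁, h₁) (g₁, h₂) := by
  intro hx
  have heq : (strongProd G H).dist (g₁, h₁) (g₂, h₃) +
      (strongProd G H).dist (g₂, h₃) (g₁, h₂) =
      (strongProd G H).dist (g₁, h₁) (g₁, h₂) := hx
  have hne : H.dist h₁ h₃ + H.dist h₃ h₂ ≠ H.dist h₁ h₂ := hmem
  have htri : H.dist h₁ h₂ ≤ H.dist h₁ h₃ + H.dist h₃ h₂ := hH.dist_triangle
  have h1 : H.dist h₁ h₃ ≤ (strongProd G H).dist (g₁, h₁) (g₂, h₃) :=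
    distH_le_strongProd_dist hG hH (g₁, h₁) (g₂, h₃)
  have h2 : H.dist h₃ h₂ ≤ (strongProd G H).dist (g₂, h₃) (g₁, h₂) :=
    distH_le_strongProd_dist hG hH (g₂, h₃) (g₁, h₂)
  have h3 : (strongProd G H).dist (g₁, h₁) (g₁, h₂) ≤ H.dist h₁ h₂ :=
    strongProd_dist_le hH g₁ h₁ h₂
  omega
end

section
/- For any two nontrivial connected graphs G and H, the geodetic number of G ⊠ H is at least 4; that is, no set of at most 3 vertices of G ⊠ H is geodetic. -/
open SimpleGraph

namespace SPAux

variable {α β : Type*} {G : SimpleGraph α} {H : SimpleGraph β}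

def zipWalk : ∀ {a b : α} {c d : β}, G.Walk a b → H.Walk c d →
    (strongProd G H).Walk (a, c) (b, d)
  | a, _, _, _, Walk.nil, Walk.nil => Walk.nil
  | a, _, _, _, Walk.nil, @Walk.cons _ _ _ m _ h q =>
      Walk.cons (v := (a, m)) ⟨fun he => h.ne (congrArg Prod.snd he), Or.inl rfl, Or.inr h⟩
        (zipWalk Walk.nil q)
  | _, _, c, _, @Walk.cons _ _ _ m _ h p, Walk.nil =>
      Walk.cons (v := (m, c)) ⟨fun he => h.ne (congrArg Prod.fst he), Or.inr h, Or.inl rfl⟩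
        (zipWalk p Walk.nil)
  | _, _, _, _, @Walk.cons _ _ _ m _ h p, @Walk.cons _ _ _ m' _ h' q =>
      Walk.cons (v := (m, m')) ⟨fun he => h.ne (congrArg Prod.fst he), Or.inr h, Or.inr h'⟩
        (zipWalk p q)

lemma zipWalk_length : ∀ {a b : α} {c d : β} (p : G.Walk a b) (q : H.Walk c d),
    (zipWalk p q).length = max p.length q.length
  | _, _, _, _, Walk.nil, Walk.nil => by simp [zipWalk]
  | _, _, _, _, Walk.nil, Walk.cons h q => by
      rw [zipWalk]; show (zipWalk Walk.nil q).length + 1 = _; rw [zipWalk_length Walk.nil q]; simp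
  | _, _, _, _, Walk.cons h p, Walk.nil => by
      rw [zipWalk]; show (zipWalk p Walk.nil).length + 1 = _; rw [zipWalk_length p Walk.nil]; simp
  | _, _, _, _, Walk.cons h p, Walk.cons h' q => by
      rw [zipWalk]; show (zipWalk p q).length + 1 = _; rw [zipWalk_length p q]; simp

lemma proj1 : ∀ {u v : α × β} (p : (strongProd G H).Walk u v),
    ∃ w : G.Walk u.1 v.1, w.length ≤ p.length := by
  intro u v p
  induction p with
  | nil => exact ⟨Walk.nil, le_rfl⟩
  | cons h p ih =>
    obtain ⟨w, hw⟩ := ih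
    rcases h.2.1 with e | ha
    · exact ⟨w.copy e.symm rfl, by simp [hw]; omega⟩
    · exact ⟨Walk.cons ha w, by simp; omega⟩

lemma proj2 : ∀ {u v : α × β} (p : (strongProd G H).Walk u v),
    ∃ w : H.Walk u.2 v.2, w.length ≤ p.length := by
  intro u v p
  induction p with
  | nil => exact ⟨Walk.nil, le_rfl⟩
  | cons h p ih =>
    obtain ⟨w, hw⟩ := ih
    rcases h.2.2 with e | ha
    · exact ⟨w.copy e.symm rfl, by simp [hw]; omega⟩
    · exact ⟨Walk.cons ha w, by simp; omega⟩

lemma strongProd_connected (hG : G.Connected) (hH : H.Connected) :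
    (strongProd G H).Connected := by
  have : Nonempty (α × β) := ⟨⟨hG.nonempty.some, hH.nonempty.some⟩⟩
  refine ⟨fun u v => ?_⟩
  obtain ⟨p⟩ := hG u.1 v.1
  obtain ⟨q⟩ := hH u.2 v.2
  exact ⟨zipWalk p q⟩

lemma dist_strongProd (hG : G.Connected) (hH : H.Connected) (u v : α × β) :
    (strongProd G H).dist u v = max (G.dist u.1 v.1) (H.dist u.2 v.2) := by
  apply le_antisymm
  · obtain ⟨p, hp⟩ := hG.exists_walk_length_eq_dist u.1 v.1
    obtain ⟨q, hq⟩ := hH.exists_walk_length_eq_dist u.2 v.2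
    calc (strongProd G H).dist u v ≤ (zipWalk p q).length := dist_le _
    _ = _ := by rw [zipWalk_length, hp, hq]
  · obtain ⟨r, hr⟩ := (strongProd_connected hG hH).exists_walk_length_eq_dist u v
    obtain ⟨w1, hw1⟩ := proj1 r
    obtain ⟨w2, hw2⟩ := proj2 r
    have := dist_le w1
    have := dist_le w2
    omega

/-- The coverage formula: `w` lies on a geodesic between `u` and `v` in the strong product. -/
def covExpr (G : SimpleGraph α) (H : SimpleGraph β) (u v w : α × β) : Prop :=
  max (G.dist u.1 w.1) (H.dist u.2 w.2) + max (G.dist w.1 v.1) (H.dist w.2 v.2)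
    = max (G.dist u.1 v.1) (H.dist u.2 v.2)

lemma mem_interval_iff (hG : G.Connected) (hH : H.Connected) (u v w : α × β) :
    w ∈ interval (strongProd G H) u v ↔ covExpr G H u v w := by
  unfold interval covExpr
  rw [Set.mem_setOf_eq, dist_strongProd hG hH, dist_strongProd hG hH, dist_strongProd hG hH]

lemma covExpr_comm (u v w : α × β) : covExpr G H u v w ↔ covExpr G H v u w := by
  unfold covExpr
  have e1 : G.dist u.1 w.1 = G.dist w.1 u.1 := dist_comm
  have e2 : G.dist w.1 v.1 = G.dist v.1 w.1 := dist_comm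
  have e3 : G.dist u.1 v.1 = G.dist v.1 u.1 := dist_comm
  have f1 : H.dist u.2 w.2 = H.dist w.2 u.2 := dist_comm
  have f2 : H.dist w.2 v.2 = H.dist v.2 w.2 := dist_comm
  have f3 : H.dist u.2 v.2 = H.dist v.2 u.2 := dist_comm
  rw [e1, e2, e3, f1, f2, f3]
  omega

lemma covExpr_swap (u v w : α × β) :
    covExpr G H u v w ↔ covExpr H G u.swap v.swap w.swap := by
  unfold covExpr
  simp only [Prod.fst_swap, Prod.snd_swap]
  omega

lemma covExpr_self (hG : G.Connected) (hH : H.Connected) {a w : α × β}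
    (h : covExpr G H a a w) : w = a := by
  unfold covExpr at h
  rw [dist_self, dist_self] at h
  have h1 : G.dist a.1 w.1 = 0 := by omega
  have h2 : H.dist a.2 w.2 = 0 := by omega
  exact Prod.ext (hG.dist_eq_zero_iff.mp h1).symm (hH.dist_eq_zero_iff.mp h2).symm

lemma covExpr_left (a b : α × β) : covExpr G H a b a := by
  unfold covExpr; rw [dist_self, dist_self]; omega

lemma covExpr_right (a b : α × β) : covExpr G H a b b := by
  unfold covExpr; rw [dist_self, dist_self]; omega

lemma core_lemma [Nontrivial α] [Nontrivial β] (hG : G.Connected) (hH : H.Connected)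
    (g1 g2 g3 : α) (h1 h2 h3 : β)
    (d12 : H.dist h1 h2 ≤ G.dist g1 g2) (d13 : H.dist h1 h3 ≤ G.dist g1 g3)
    (hcov : ∀ (x : α) (y : β),
      max (G.dist g1 x) (H.dist h1 y) + max (G.dist x g2) (H.dist y h2)
          = max (G.dist g1 g2) (H.dist h1 h2) ∨
      max (G.dist g1 x) (H.dist h1 y) + max (G.dist x g3) (H.dist y h3)
          = max (G.dist g1 g3) (H.dist h1 h3) ∨
      max (G.dist g2 x) (H.dist h2 y) + max (G.dist x g3) (H.dist y h3)
          = max (G.dist g2 g3) (H.dist h2 h3)) : False := by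
  have e21 : G.dist g2 g1 = G.dist g1 g2 := G.dist_comm
  have e31 : G.dist g3 g1 = G.dist g1 g3 := G.dist_comm
  have e32 : G.dist g3 g2 = G.dist g2 g3 := G.dist_comm
  rcases le_or_gt (H.dist h2 h3) (G.dist g2 g3) with hA | hB
  · -- all pairs G-dominant
    have E1 : G.dist g1 g2 + G.dist g1 g3 = G.dist g2 g3 := by
      obtain ⟨y1, hy1⟩ := exists_ne h1
      have tri : G.dist g2 g3 ≤ G.dist g2 g1 + G.dist g1 g3 := hG.dist_triangle
      rcases hcov g1 y1 with h | h | h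
      · rw [dist_self] at h
        exact absurd (hH.dist_eq_zero_iff.mp (by omega) : h1 = y1).symm hy1
      · rw [dist_self] at h
        exact absurd (hH.dist_eq_zero_iff.mp (by omega) : h1 = y1).symm hy1
      · omega
    have E2 : G.dist g1 g2 + G.dist g2 g3 = G.dist g1 g3 := by
      obtain ⟨y2, hy2⟩ := exists_ne h2
      have tri : G.dist g1 g3 ≤ G.dist g1 g2 + G.dist g2 g3 := hG.dist_triangle
      rcases hcov g2 y2 with h | h | h
      · rw [dist_self] at h
        exact absurd (hH.dist_eq_zero_iff.mp (by omega) : y2 = h2) hy2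
      · omega
      · rw [dist_self] at h
        exact absurd (hH.dist_eq_zero_iff.mp (by omega) : h2 = y2).symm hy2
    have E3 : G.dist g1 g3 + G.dist g2 g3 = G.dist g1 g2 := by
      obtain ⟨y3, hy3⟩ := exists_ne h3
      have tri : G.dist g1 g2 ≤ G.dist g1 g3 + G.dist g3 g2 := hG.dist_triangle
      rcases hcov g3 y3 with h | h | h
      · omega
      · rw [dist_self] at h
        exact absurd (hH.dist_eq_zero_iff.mp (by omega) : y3 = h3) hy3
      · rw [dist_self] at h
        exact absurd (hH.dist_eq_zero_iff.mp (by omega) : y3 = h3) hy3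
    have p12 : G.dist g1 g2 = 0 := by omega
    have p13 : G.dist g1 g3 = 0 := by omega
    obtain rfl : g1 = g2 := hG.dist_eq_zero_iff.mp p12
    obtain rfl : g1 = g3 := hG.dist_eq_zero_iff.mp p13
    obtain rfl : h1 = h2 := hH.dist_eq_zero_iff.mp (by omega)
    obtain rfl : h1 = h3 := hH.dist_eq_zero_iff.mp (by omega)
    obtain ⟨g0, hg0⟩ := exists_ne g1
    have h := hcov g0 h1
    rw [dist_self, dist_self] at h
    have e01 : G.dist g0 g1 = G.dist g1 g0 := G.dist_comm
    exact hg0 (hG.dist_eq_zero_iff.mp (by omega) : g1 = g0).symm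
  · -- pair 23 strictly H-dominant
    have hh2 : h2 = h1 := by
      by_contra hne
      rcases hcov g1 h2 with h | h | h
      · rw [dist_self, dist_self] at h
        exact hne (hH.dist_eq_zero_iff.mp (by omega) : h1 = h2).symm
      · rw [dist_self] at h
        exact hne (hH.dist_eq_zero_iff.mp (by omega) : h1 = h2).symm
      · rw [dist_self] at h
        exact hne (hH.dist_eq_zero_iff.mp (by omega) : h1 = h2).symm
    have hh3 : h3 = h1 := by
      by_contra hne
      rcases hcov g1 h3 with h | h | h
      · rw [dist_self] at h
        exact hne (hH.dist_eq_zero_iff.mp (by omega) : h1 = h3).symm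
      · rw [dist_self, dist_self] at h
        exact hne (hH.dist_eq_zero_iff.mp (by omega) : h1 = h3).symm
      · rw [dist_self] at h
        exact hne (hH.dist_eq_zero_iff.mp (by omega) : h1 = h3).symm
    rw [hh2, hh3, dist_self] at hB
    omega

/-- A nonempty set of `ncard ≤ 3` is contained in a triple. -/
lemma exists_triple {V : Type*} [Finite V] (S : Set V) (h3 : S.ncard ≤ 3)
    (hne : S.Nonempty) : ∃ a b c : V, S ⊆ {a, b, c} := by
  interval_cases h : S.ncard
  · rw [Set.ncard_eq_zero] at h
    exact absurd h hne.ne_empty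
  · obtain ⟨a, rfl⟩ := Set.ncard_eq_one.mp h
    exact ⟨a, a, a, by simp⟩
  · obtain ⟨a, b, -, rfl⟩ := Set.ncard_eq_two.mp h
    exact ⟨a, b, b, by intro x hx; simp at hx ⊢; tauto⟩
  · obtain ⟨a, b, c, -, -, -, rfl⟩ := Set.ncard_eq_three.mp h
    exact ⟨a, b, c, le_rfl⟩

end SPAux

open SPAux in
theorem strongProd_geodeticNumber_ge_four {α β : Type*} [Fintype α] [Fintype β]
    [Nontrivial α] [Nontrivial β]
    (G : SimpleGraph α) (H : SimpleGraph β) (hG : G.Connected) (hH : H.Connected) :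
    4 ≤ geodeticNumber (strongProd G H) ∧
      ∀ S : Set (α × β), S.ncard ≤ 3 → ¬ IsGeodetic (strongProd G H) S := by
  have hmain : ∀ S : Set (α × β), S.ncard ≤ 3 → ¬ IsGeodetic (strongProd G H) S := by
    intro S hS hgeo
    -- S is nonempty
    have hSne : S.Nonempty := by
      rcases Set.eq_empty_or_nonempty S with rfl | h
      · have : (Nonempty (α × β)) := inferInstance
        obtain ⟨w⟩ := this
        have hw : w ∈ intervalSet (strongProd G H) (∅ : Set (α × β)) := by
          rw [hgeo]; trivial
        simp [intervalSet] at hw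
      · exact h
    obtain ⟨u1, u2, u3, hsub⟩ := exists_triple S hS hSne
    -- coverage by the three intervals
    have hcov0 : ∀ w : α × β,
        covExpr G H u1 u2 w ∨ covExpr G H u1 u3 w ∨ covExpr G H u2 u3 w := by
      intro w
      have hw : w ∈ intervalSet (strongProd G H) S := by rw [hgeo]; trivial
      simp only [intervalSet, Set.mem_iUnion] at hw
      obtain ⟨u, hu, v, hv, hw⟩ := hw
      have hcw := (mem_interval_iff hG hH u v w).mp hw
      have hu' : u = u1 ∨ u = u2 ∨ u = u3 := by simpa using hsub hu
      have hv' : v = u1 ∨ v = u2 ∨ v = u3 := by simpa using hsub hv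
      rcases hu' with rfl | rfl | rfl <;> rcases hv' with rfl | rfl | rfl
      · obtain rfl := covExpr_self hG hH hcw
        exact Or.inl (covExpr_left _ _)
      · exact Or.inl hcw
      · exact Or.inr (Or.inl hcw)
      · exact Or.inl ((covExpr_comm _ _ _).mp hcw)
      · obtain rfl := covExpr_self hG hH hcw
        exact Or.inl (covExpr_right _ _)
      · exact Or.inr (Or.inr hcw)
      · exact Or.inr (Or.inl ((covExpr_comm _ _ _).mp hcw))
      · exact Or.inr (Or.inr ((covExpr_comm _ _ _).mp hcw))
      · obtain rfl := covExpr_self hG hH hcw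
        exact Or.inr (Or.inr (covExpr_right _ _))
    -- helper: covExpr unfolded at a point
    have hcovP : ∀ (x : α) (y : β),
        covExpr G H u1 u2 (x, y) ∨ covExpr G H u1 u3 (x, y) ∨ covExpr G H u2 u3 (x, y) :=
      fun x y => hcov0 (x, y)
    -- pair comm/swap lemmas at point level
    have pc : ∀ (u v : α × β) (x : α) (y : β),
        covExpr G H u v (x, y) ↔ covExpr G H v u (x, y) := fun u v x y => covExpr_comm u v (x, y)
    have ps : ∀ (u v : α × β) (x : α) (y : β),
        covExpr G H u v (x, y) ↔ covExpr H G u.swap v.swap (y, x) := by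
      intro u v x y
      rw [covExpr_swap u v (x, y)]; rfl
    rcases le_total (H.dist u1.2 u2.2) (G.dist u1.1 u2.1) with c12 | c12 <;>
      rcases le_total (H.dist u1.2 u3.2) (G.dist u1.1 u3.1) with c13 | c13 <;>
      rcases le_total (H.dist u2.2 u3.2) (G.dist u2.1 u3.1) with c23 | c23
    -- 1: GGG
    · exact core_lemma hG hH u1.1 u2.1 u3.1 u1.2 u2.2 u3.2 c12 c13 hcovP
    -- 2: GGH
    · exact core_lemma hG hH u1.1 u2.1 u3.1 u1.2 u2.2 u3.2 c12 c13 hcovP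
    -- 3: GHG : pairs 12, 23 G-type, common index 2
    · refine core_lemma hG hH u2.1 u1.1 u3.1 u2.2 u1.2 u3.2 ?_ c23 ?_
      · rwa [show H.dist u2.2 u1.2 = H.dist u1.2 u2.2 from dist_comm,
          show G.dist u2.1 u1.1 = G.dist u1.1 u2.1 from dist_comm]
      · intro x y
        rcases hcovP x y with h | h | h
        · exact Or.inl ((pc u1 u2 x y).mp h)
        · exact Or.inr (Or.inr h)
        · exact Or.inr (Or.inl h)
    -- 4: GHH : pairs 13, 23 H-type, common index 3, swapped
    · refine core_lemma hH hG u3.2 u1.2 u2.2 u3.1 u1.1 u2.1 ?_ ?_ ?_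
      · rwa [show G.dist u3.1 u1.1 = G.dist u1.1 u3.1 from dist_comm,
          show H.dist u3.2 u1.2 = H.dist u1.2 u3.2 from dist_comm]
      · rwa [show G.dist u3.1 u2.1 = G.dist u2.1 u3.1 from dist_comm,
          show H.dist u3.2 u2.2 = H.dist u2.2 u3.2 from dist_comm]
      · intro x y
        rcases hcovP y x with h | h | h
        · exact Or.inr (Or.inr ((ps u1 u2 y x).mp h))
        · exact Or.inl ((ps u3 u1 y x).mp ((pc u1 u3 y x).mp h))
        · exact Or.inr (Or.inl ((ps u3 u2 y x).mp ((pc u2 u3 y x).mp h)))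
    -- 5: HGG : pairs 13, 23 G-type, common index 3
    · refine core_lemma hG hH u3.1 u1.1 u2.1 u3.2 u1.2 u2.2 ?_ ?_ ?_
      · rwa [show H.dist u3.2 u1.2 = H.dist u1.2 u3.2 from dist_comm,
          show G.dist u3.1 u1.1 = G.dist u1.1 u3.1 from dist_comm]
      · rwa [show H.dist u3.2 u2.2 = H.dist u2.2 u3.2 from dist_comm,
          show G.dist u3.1 u2.1 = G.dist u2.1 u3.1 from dist_comm]
      · intro x y
        rcases hcovP x y with h | h | h
        · exact Or.inr (Or.inr h)
        · exact Or.inl ((pc u1 u3 x y).mp h)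
        · exact Or.inr (Or.inl ((pc u2 u3 x y).mp h))
    -- 6: HGH : pairs 12, 23 H-type, common index 2, swapped
    · refine core_lemma hH hG u2.2 u1.2 u3.2 u2.1 u1.1 u3.1 ?_ c23 ?_
      · rwa [show G.dist u2.1 u1.1 = G.dist u1.1 u2.1 from dist_comm,
          show H.dist u2.2 u1.2 = H.dist u1.2 u2.2 from dist_comm]
      · intro x y
        rcases hcovP y x with h | h | h
        · exact Or.inl ((ps u2 u1 y x).mp ((pc u1 u2 y x).mp h))
        · exact Or.inr (Or.inr ((ps u1 u3 y x).mp h))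
        · exact Or.inr (Or.inl ((ps u2 u3 y x).mp h))
    -- 7: HHG : pairs 12, 13 H-type, common index 1, swapped
    · refine core_lemma hH hG u1.2 u2.2 u3.2 u1.1 u2.1 u3.1 c12 c13 ?_
      intro x y
      rcases hcovP y x with h | h | h
      · exact Or.inl ((ps u1 u2 y x).mp h)
      · exact Or.inr (Or.inl ((ps u1 u3 y x).mp h))
      · exact Or.inr (Or.inr ((ps u2 u3 y x).mp h))
    -- 8: HHH
    · exact core_lemma hH hG u1.2 u2.2 u3.2 u1.1 u2.1 u3.1 c12 c13
        (fun x y => by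
          rcases hcovP y x with h | h | h
          · exact Or.inl ((ps u1 u2 y x).mp h)
          · exact Or.inr (Or.inl ((ps u1 u3 y x).mp h))
          · exact Or.inr (Or.inr ((ps u2 u3 y x).mp h)))
  refine ⟨?_, hmain⟩
  have huniv : IsGeodetic (strongProd G H) (Set.univ : Set (α × β)) := by
    unfold IsGeodetic intervalSet
    apply Set.eq_univ_of_forall
    intro w
    simp only [Set.mem_iUnion]
    exact ⟨w, Set.mem_univ w, w, Set.mem_univ w, by simp [interval, SimpleGraph.dist_self]⟩
  refine le_csInf ⟨(Set.univ : Set (α × β)).ncard, Set.univ, rfl, huniv⟩ ?_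
  rintro b ⟨S, rfl, hSg⟩
  by_contra hlt
  exact hmain S (by omega) hSg
end

section
/- For any two connected graphs G and H, min{g(G), g(H)} ≤ g(G ⊠ H) ≤ g(G)·g(H), where g denotes the geodetic number. -/
open SimpleGraph

section helpers

variable {α β : Type*} {G : SimpleGraph α} {H : SimpleGraph β}

lemma sp_adj_G {a a' : α} (c : β) (h : G.Adj a a') :
    (strongProd G H).Adj (a, c) (a', c) :=
  ⟨fun he => h.ne (congrArg Prod.fst he), Or.inr h, Or.inl rfl⟩

lemma sp_adj_H {c c' : β} (a : α) (h : H.Adj c c') :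
    (strongProd G H).Adj (a, c) (a, c') :=
  ⟨fun he => h.ne (congrArg Prod.snd he), Or.inl rfl, Or.inr h⟩

lemma liftG {a b : α} (c : β) (p : G.Walk a b) :
    ∃ w : (strongProd G H).Walk (a, c) (b, c), w.length = p.length := by
  induction p with
  | nil => exact ⟨.nil, rfl⟩
  | cons h p ih =>
    obtain ⟨w, hw⟩ := ih
    exact ⟨.cons (sp_adj_G c h) w, by simp [hw]⟩

lemma liftH {c d : β} (a : α) (q : H.Walk c d) :
    ∃ w : (strongProd G H).Walk (a, c) (a, d), w.length = q.length := by
  induction q with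
  | nil => exact ⟨.nil, rfl⟩
  | cons h q ih =>
    obtain ⟨w, hw⟩ := ih
    exact ⟨.cons (sp_adj_H a h) w, by simp [hw]⟩

lemma combine {a b : α} (p : G.Walk a b) :
    ∀ {c d : β} (q : H.Walk c d),
      ∃ w : (strongProd G H).Walk (a, c) (b, d), w.length = max p.length q.length := by
  induction p with
  | nil =>
    intro c d q
    obtain ⟨w, hw⟩ := liftH (H := H) (G := G) _ q
    exact ⟨w, by simp [hw]⟩
  | @cons a a' b h p ih =>
    intro c d q
    cases q with
    | nil =>
      obtain ⟨w, hw⟩ := liftG (H := H) c (SimpleGraph.Walk.cons h p)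
      exact ⟨w, by simp [hw]⟩
    | @cons c c' d h' q =>
      obtain ⟨w, hw⟩ := ih q
      refine ⟨.cons ⟨?_, Or.inr h, Or.inr h'⟩ w, ?_⟩
      · exact fun he => h.ne (congrArg Prod.fst he)
      · show w.length + 1 = _
        rw [hw]; simp [Nat.succ_max_succ]

lemma proj1 {x y : α × β} (p : (strongProd G H).Walk x y) :
    ∃ q : G.Walk x.1 y.1, q.length ≤ p.length := by
  induction p with
  | nil => exact ⟨.nil, le_refl _⟩
  | @cons x b y h p ih =>
    obtain ⟨q, hq⟩ := ih
    rcases h.2.1 with he | ha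
    · exact ⟨q.copy he.symm rfl, by simpa using Nat.le_succ_of_le hq⟩
    · exact ⟨.cons ha q, by simpa using hq⟩

lemma proj2 {x y : α × β} (p : (strongProd G H).Walk x y) :
    ∃ q : H.Walk x.2 y.2, q.length ≤ p.length := by
  induction p with
  | nil => exact ⟨.nil, le_refl _⟩
  | @cons x b y h p ih =>
    obtain ⟨q, hq⟩ := ih
    rcases h.2.2 with he | ha
    · exact ⟨q.copy he.symm rfl, by simpa using Nat.le_succ_of_le hq⟩
    · exact ⟨.cons ha q, by simpa using hq⟩

lemma sp_connected (hG : G.Connected) (hH : H.Connected) :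
    (strongProd G H).Connected := by
  rw [connected_iff]
  refine ⟨fun x y => ?_, ⟨(hG.nonempty.some, hH.nonempty.some)⟩⟩
  obtain ⟨p⟩ := hG x.1 y.1
  obtain ⟨q⟩ := hH x.2 y.2
  obtain ⟨w, -⟩ := combine p q
  exact ⟨w⟩

lemma sp_dist (hG : G.Connected) (hH : H.Connected) (x y : α × β) :
    (strongProd G H).dist x y = max (G.dist x.1 y.1) (H.dist x.2 y.2) := by
  refine le_antisymm ?_ ?_
  · obtain ⟨p, hp⟩ := hG.exists_walk_length_eq_dist x.1 y.1
    obtain ⟨q, hq⟩ := hH.exists_walk_length_eq_dist x.2 y.2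
    obtain ⟨w, hw⟩ := combine p q
    calc (strongProd G H).dist x y ≤ w.length := SimpleGraph.dist_le w
    _ = _ := by rw [hw, hp, hq]
  · obtain ⟨w, hw⟩ := (sp_connected hG hH).exists_walk_length_eq_dist x y
    obtain ⟨p, hp⟩ := proj1 w
    obtain ⟨q, hq⟩ := proj2 w
    exact max_le (le_trans (SimpleGraph.dist_le p) (hw ▸ hp))
      (le_trans (SimpleGraph.dist_le q) (hw ▸ hq))

end helpers

section geod
variable {V : Type*} {G0 : SimpleGraph V}

lemma mem_intervalSet {S : Set V} {w : V} :
    w ∈ intervalSet G0 S ↔ ∃ u ∈ S, ∃ v ∈ S, G0.dist u w + G0.dist w v = G0.dist u v := by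
  simp [intervalSet, interval]

lemma isGeodetic_univ : IsGeodetic G0 (Set.univ : Set V) := by
  rw [IsGeodetic, Set.eq_univ_iff_forall]
  intro w
  exact mem_intervalSet.mpr ⟨w, trivial, w, trivial, by simp [SimpleGraph.dist_self]⟩

lemma exists_geodetic_card :
    ∃ S : Set V, S.ncard = geodeticNumber G0 ∧ IsGeodetic G0 S := by
  have h : {n : ℕ | ∃ S : Set V, S.ncard = n ∧ IsGeodetic G0 S}.Nonempty :=
    ⟨(Set.univ : Set V).ncard, Set.univ, rfl, isGeodetic_univ⟩
  exact Nat.sInf_mem h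

lemma geodeticNumber_le {S : Set V} (h : IsGeodetic G0 S) :
    geodeticNumber G0 ≤ S.ncard :=
  Nat.sInf_le ⟨S, rfl, h⟩

end geod

lemma pairing (a b c e A C : ℕ) (hA : a + b = A) (hC : c + e = C) :
    max a c + max b e = max A C ∨ max a e + max b c = max A C ∨
    max a c + max b c = max A 0 ∨ max a e + max b e = max A 0 ∨
    max a c + max a e = max 0 C ∨ max b c + max b e = max 0 C := by omega

theorem strongProd_geodeticNumber_bounds {α β : Type*} [Fintype α] [Fintype β]
    (G : SimpleGraph α) (H : SimpleGraph β) (hG : G.Connected) (hH : H.Connected) :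
    min (geodeticNumber G) (geodeticNumber H) ≤ geodeticNumber (strongProd G H) ∧
      geodeticNumber (strongProd G H) ≤ geodeticNumber G * geodeticNumber H := by
  constructor
  · -- lower bound
    obtain ⟨W, hWcard, hWgeo⟩ := exists_geodetic_card (G0 := strongProd G H)
    by_cases hg : IsGeodetic G (Prod.fst '' W)
    · refine le_trans (min_le_left _ _) ?_
      calc geodeticNumber G ≤ (Prod.fst '' W).ncard := geodeticNumber_le hg
        _ ≤ W.ncard := Set.ncard_image_le W.toFinite
        _ = _ := hWcard
    · have hgeoH : IsGeodetic H (Prod.snd '' W) := by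
        rw [IsGeodetic, Set.eq_univ_iff_forall]
        intro w2
        have hex : ∃ w1, w1 ∉ intervalSet G (Prod.fst '' W) := by
          by_contra hc; push_neg at hc
          exact hg (Set.eq_univ_iff_forall.mpr hc)
        obtain ⟨w1, hw1⟩ := hex
        have hmem : (w1, w2) ∈ intervalSet (strongProd G H) W := by
          rw [hWgeo]; trivial
        rw [mem_intervalSet] at hmem
        obtain ⟨p, hp, q, hq, hd⟩ := hmem
        rw [sp_dist hG hH, sp_dist hG hH, sp_dist hG hH] at hd
        dsimp only at hd
        have hGtri := hG.dist_triangle (u := p.1) (v := w1) (w := q.1)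
        have hHtri := hH.dist_triangle (u := p.2) (v := w2) (w := q.2)
        have hne : G.dist p.1 w1 + G.dist w1 q.1 ≠ G.dist p.1 q.1 := fun he =>
          hw1 (mem_intervalSet.mpr ⟨p.1, ⟨p, hp, rfl⟩, q.1, ⟨q, hq, rfl⟩, he⟩)
        exact mem_intervalSet.mpr ⟨p.2, ⟨p, hp, rfl⟩, q.2, ⟨q, hq, rfl⟩, by omega⟩
      refine le_trans (min_le_right _ _) ?_
      calc geodeticNumber H ≤ (Prod.snd '' W).ncard := geodeticNumber_le hgeoH
        _ ≤ W.ncard := Set.ncard_image_le W.toFinite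
        _ = _ := hWcard
  · -- upper bound
    obtain ⟨S, hScard, hSgeo⟩ := exists_geodetic_card (G0 := G)
    obtain ⟨T, hTcard, hTgeo⟩ := exists_geodetic_card (G0 := H)
    have hgeo : IsGeodetic (strongProd G H) (S ×ˢ T) := by
      rw [IsGeodetic, Set.eq_univ_iff_forall]
      rintro ⟨w1, w2⟩
      obtain ⟨u, hu, v, hv, ha⟩ :=
        mem_intervalSet.mp ((Set.eq_univ_iff_forall.mp hSgeo) w1)
      obtain ⟨s, hs, t, ht, hc⟩ :=
        mem_intervalSet.mp ((Set.eq_univ_iff_forall.mp hTgeo) w2)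
      have hg1 : G.dist w1 u = G.dist u w1 := G.dist_comm
      have hg2 : G.dist w1 v = G.dist v w1 := G.dist_comm
      have hh1 : H.dist w2 s = H.dist s w2 := H.dist_comm
      have hh2 : H.dist w2 t = H.dist t w2 := H.dist_comm
      have hgu : G.dist u u = 0 := G.dist_self
      have hgv : G.dist v v = 0 := G.dist_self
      have hhs : H.dist s s = 0 := H.dist_self
      have hht : H.dist t t = 0 := H.dist_self
      have hh3 : H.dist t s = H.dist s t := H.dist_comm
      have hg3 : G.dist v u = G.dist u v := G.dist_comm
      rcases pairing (G.dist u w1) (G.dist w1 v) (H.dist s w2) (H.dist w2 t)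
        (G.dist u v) (H.dist s t) ha hc with h | h | h | h | h | h
      · refine mem_intervalSet.mpr ⟨(u, s), ⟨hu, hs⟩, (v, t), ⟨hv, ht⟩, ?_⟩
        rw [sp_dist hG hH, sp_dist hG hH, sp_dist hG hH]; dsimp only; omega
      · refine mem_intervalSet.mpr ⟨(u, t), ⟨hu, ht⟩, (v, s), ⟨hv, hs⟩, ?_⟩
        rw [sp_dist hG hH, sp_dist hG hH, sp_dist hG hH]; dsimp only; omega
      · refine mem_intervalSet.mpr ⟨(u, s), ⟨hu, hs⟩, (v, s), ⟨hv, hs⟩, ?_⟩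
        rw [sp_dist hG hH, sp_dist hG hH, sp_dist hG hH]; dsimp only; omega
      · refine mem_intervalSet.mpr ⟨(u, t), ⟨hu, ht⟩, (v, t), ⟨hv, ht⟩, ?_⟩
        rw [sp_dist hG hH, sp_dist hG hH, sp_dist hG hH]; dsimp only; omega
      · refine mem_intervalSet.mpr ⟨(u, s), ⟨hu, hs⟩, (u, t), ⟨hu, ht⟩, ?_⟩
        rw [sp_dist hG hH, sp_dist hG hH, sp_dist hG hH]; dsimp only; omega
      · refine mem_intervalSet.mpr ⟨(v, s), ⟨hv, hs⟩, (v, t), ⟨hv, ht⟩, ?_⟩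
        rw [sp_dist hG hH, sp_dist hG hH, sp_dist hG hH]; dsimp only; omega
    calc geodeticNumber (strongProd G H) ≤ (S ×ˢ T).ncard := geodeticNumber_le hgeo
      _ = S.ncard * T.ncard := by
          rw [← Nat.card_coe_set_eq, ← Nat.card_coe_set_eq,
            ← Nat.card_coe_set_eq, ← Nat.card_prod]
          exact Nat.card_congr (Equiv.Set.prod S T)
      _ = _ := by rw [hScard, hTcard]
end

section
/- Let G be a connected graph with no simplicial vertices and H any connected graph. If S is a hull set of G and x is any vertex of H, then S × {x} is a hull set of G ⊠ H. Consequently, h(G ⊠ H) ≤ h(G). -/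
open SimpleGraph

section Aux

variable {α β : Type*} {G : SimpleGraph α} {H : SimpleGraph β}

/-- Embedding of `G` into the strong product at a fixed second coordinate. -/
def fstHom (h : β) : G →g strongProd G H :=
  ⟨fun g => (g, h), fun {a b} hab =>
    ⟨by simp [Prod.ext_iff, hab.ne], Or.inr hab, Or.inl rfl⟩⟩

/-- Embedding of `H` into the strong product at a fixed first coordinate. -/
def sndHom (g : α) : H →g strongProd G H :=
  ⟨fun h => (g, h), fun {a b} hab =>
    ⟨by simp [Prod.ext_iff, hab.ne], Or.inl rfl, Or.inr hab⟩⟩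

/-- Combine a walk in `G` and a walk in `H` into a walk in the strong
product of length the max of the two lengths. -/
def walkProd : ∀ {g g' : α} {h h' : β}, G.Walk g g' → H.Walk h h' →
    (strongProd G H).Walk (g, h) (g', h')
  | _, _, _, _, SimpleGraph.Walk.nil, q => q.map (sndHom _)
  | _, _, _, _, SimpleGraph.Walk.cons a p, SimpleGraph.Walk.nil =>
      (SimpleGraph.Walk.cons a p).map (fstHom _)
  | _, _, _, _, @SimpleGraph.Walk.cons _ _ _ m _ a p,
      @SimpleGraph.Walk.cons _ _ _ n _ b q =>
      SimpleGraph.Walk.cons (v := (m, n))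
        ⟨by simp [Prod.ext_iff, a.ne], Or.inr a, Or.inr b⟩ (walkProd p q)

lemma walkProd_length : ∀ {g g' : α} {h h' : β} (p : G.Walk g g')
    (q : H.Walk h h'), (walkProd p q).length = max p.length q.length
  | _, _, _, _, SimpleGraph.Walk.nil, q => by
      simp [walkProd, SimpleGraph.Walk.length_map]
      exact SimpleGraph.Walk.length_map _ _
  | _, _, _, _, SimpleGraph.Walk.cons a p, SimpleGraph.Walk.nil => by
      simp [walkProd, SimpleGraph.Walk.length_map]
      exact congrArg (· + 1) (SimpleGraph.Walk.length_map _ _)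
  | _, _, _, _, @SimpleGraph.Walk.cons _ _ _ m _ a p,
      @SimpleGraph.Walk.cons _ _ _ n _ b q => by
      simp [walkProd, walkProd_length p q, Nat.succ_max_succ]
      exact congrArg (· + 1) (walkProd_length p q)

lemma strongProd_reachable (hG : G.Connected) (hH : H.Connected)
    (x y : α × β) : (strongProd G H).Reachable x y := by
  obtain ⟨p⟩ := hG.preconnected x.1 y.1
  obtain ⟨q⟩ := hH.preconnected x.2 y.2
  exact ⟨walkProd p q⟩

lemma dist_fst_le (hG : G.Connected) :
    ∀ {x y : α × β} (p : (strongProd G H).Walk x y), G.dist x.1 y.1 ≤ p.length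
  | _, _, SimpleGraph.Walk.nil => by simp
  | x, y, SimpleGraph.Walk.cons (v := z) a p => by
      have h1 : G.dist x.1 z.1 ≤ 1 := by
        rcases a.2.1 with h | h
        · simp [h, SimpleGraph.dist_self]
        · rw [SimpleGraph.dist_eq_one_iff_adj.mpr h]
      calc G.dist x.1 y.1 ≤ G.dist x.1 z.1 + G.dist z.1 y.1 :=
            hG.dist_triangle
        _ ≤ 1 + p.length := Nat.add_le_add h1 (dist_fst_le hG p)
        _ = (SimpleGraph.Walk.cons a p).length := by
            simp [SimpleGraph.Walk.length_cons, Nat.add_comm]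

lemma dist_snd_le (hH : H.Connected) :
    ∀ {x y : α × β} (p : (strongProd G H).Walk x y), H.dist x.2 y.2 ≤ p.length
  | _, _, SimpleGraph.Walk.nil => by simp
  | x, y, SimpleGraph.Walk.cons (v := z) a p => by
      have h1 : H.dist x.2 z.2 ≤ 1 := by
        rcases a.2.2 with h | h
        · simp [h, SimpleGraph.dist_self]
        · rw [SimpleGraph.dist_eq_one_iff_adj.mpr h]
      calc H.dist x.2 y.2 ≤ H.dist x.2 z.2 + H.dist z.2 y.2 :=
            hH.dist_triangle
        _ ≤ 1 + p.length := Nat.add_le_add h1 (dist_snd_le hH p)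
        _ = (SimpleGraph.Walk.cons a p).length := by
            simp [SimpleGraph.Walk.length_cons, Nat.add_comm]

lemma intervalSet_mono {S T : Set α} (hST : S ⊆ T) :
    intervalSet G S ⊆ intervalSet G T := by
  intro w hw
  simp only [intervalSet, Set.mem_iUnion] at hw ⊢
  obtain ⟨u, hu, v, hv, hw⟩ := hw
  exact ⟨u, hST hu, v, hST hv, hw⟩

lemma subset_intervalSet (S : Set α) : S ⊆ intervalSet G S := by
  intro u hu
  simp only [intervalSet, Set.mem_iUnion]
  exact ⟨u, hu, u, hu, by simp [interval, SimpleGraph.dist_self]⟩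

lemma iterate_intervalSet_mono {S T : Set α} (hST : S ⊆ T) (n : ℕ) :
    (intervalSet G)^[n] S ⊆ (intervalSet G)^[n] T := by
  induction n with
  | zero => simpa
  | succ n ih =>
      rw [Function.iterate_succ_apply', Function.iterate_succ_apply']
      exact intervalSet_mono ih

lemma subset_iterate_intervalSet (S : Set α) (n : ℕ) :
    S ⊆ (intervalSet G)^[n] S := by
  induction n with
  | zero => simp
  | succ n ih =>
      rw [Function.iterate_succ_apply']
      exact ih.trans (subset_intervalSet _)

lemma mem_intervalSet_s15 {S : Set α} {u v w : α} (hu : u ∈ S) (hv : v ∈ S)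
    (hw : w ∈ interval G u v) : w ∈ intervalSet G S := by
  simp only [intervalSet, Set.mem_iUnion]
  exact ⟨u, hu, v, hv, hw⟩

/-- Horizontal slices of iterated closures. -/
lemma slice_subset_iterate (hG : G.Connected) (hH : H.Connected)
    (S : Set α) (x : β) (n : ℕ) :
    ((intervalSet G)^[n] S) ×ˢ ({x} : Set β) ⊆
      (intervalSet (strongProd G H))^[n] (S ×ˢ ({x} : Set β)) := by
  induction n with
  | zero => simp
  | succ n ih =>
      rw [Function.iterate_succ_apply', Function.iterate_succ_apply']
      rintro ⟨w, y⟩ ⟨hw, hy⟩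
      simp only [Set.mem_singleton_iff] at hy
      subst hy
      simp only [intervalSet, Set.mem_iUnion] at hw
      obtain ⟨u, hu, v, hv, hw⟩ := hw
      refine mem_intervalSet_s15 (ih (Set.mk_mem_prod hu rfl)) (ih (Set.mk_mem_prod hv rfl)) ?_
      simp only [interval, Set.mem_setOf_eq] at hw ⊢
      rw [strongProd_dist hG hH, strongProd_dist hG hH, strongProd_dist hG hH,
        SimpleGraph.dist_self]
      simpa using hw

/-- Spreading step: if a full horizontal slice at `h` lies in `T` and `h'`
is at distance at most one from `h`, then the slice at `h'` lies in the
closure of `T`. -/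
lemma spread_step (hG : G.Connected) (hH : H.Connected)
    (hext : ∀ v : α, ¬ IsSimplicial G v)
    {T : Set (α × β)} {h h' : β} (hT : ∀ g : α, (g, h) ∈ T)
    (hd : H.dist h h' ≤ 1) (g : α) :
    (g, h') ∈ intervalSet (strongProd G H) T := by
  have hns := hext g
  simp only [IsSimplicial, not_forall] at hns
  obtain ⟨a, b, hga, hgb, hab, hnadj⟩ := hns
  have hd2 : G.dist a b = 2 := by
    have hle : G.dist a b ≤ 2 := by
      have := SimpleGraph.dist_le
        (SimpleGraph.Walk.cons hga.symm (SimpleGraph.Walk.cons hgb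
          SimpleGraph.Walk.nil))
      simpa using this
    have h0 : G.dist a b ≠ 0 := by
      simp only [ne_eq, hG.dist_eq_zero_iff]; exact hab
    have h1 : G.dist a b ≠ 1 := by
      simp only [ne_eq, SimpleGraph.dist_eq_one_iff_adj]; exact hnadj
    omega
  refine mem_intervalSet_s15 (hT a) (hT b) ?_
  simp only [interval, Set.mem_setOf_eq]
  rw [strongProd_dist hG hH, strongProd_dist hG hH, strongProd_dist hG hH]
  have hag : G.dist a g = 1 := SimpleGraph.dist_eq_one_iff_adj.mpr hga.symm
  have hgb' : G.dist g b = 1 := SimpleGraph.dist_eq_one_iff_adj.mpr hgb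
  have hdc : H.dist h' h ≤ 1 := by rwa [SimpleGraph.dist_comm]
  rw [hd2, hag, hgb', SimpleGraph.dist_self]
  omega

/-- Spreading: from a full slice, iterating the closure reaches every
vertex within the corresponding distance in `H`. -/
lemma spread_iterate (hG : G.Connected) (hH : H.Connected)
    (hext : ∀ v : α, ¬ IsSimplicial G v) (x : β) :
    ∀ (k : ℕ) (h : β), H.dist x h ≤ k → ∀ g : α,
      (g, h) ∈ (intervalSet (strongProd G H))^[k]
        (Set.univ ×ˢ ({x} : Set β)) := by
  intro k
  induction k with
  | zero =>
      intro h hd g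
      have : h = x := (hH.dist_eq_zero_iff.mp (Nat.le_zero.mp hd)).symm
      subst this
      simp
  | succ k ih =>
      intro h hd g
      rw [Function.iterate_succ_apply']
      by_cases hcase : H.dist x h ≤ k
      · exact spread_step hG hH hext (fun g' => ih h hcase g')
          (by rw [SimpleGraph.dist_self]; omega) g
      · obtain ⟨p, hp⟩ := (hH.preconnected h x).exists_walk_length_eq_dist
        have hhx : H.dist h x = H.dist x h := SimpleGraph.dist_comm
        cases p with
        | nil => simp [SimpleGraph.dist_self] at hcase
        | @cons _ h₂ _ a q =>
            simp only [SimpleGraph.Walk.length_cons] at hp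
            have hd2 : H.dist x h₂ ≤ k := by
              have := SimpleGraph.dist_le q.reverse
              rw [SimpleGraph.Walk.length_reverse] at this
              omega
            exact spread_step hG hH hext (fun g' => ih h₂ hd2 g')
              (le_of_eq (SimpleGraph.dist_eq_one_iff_adj.mpr a.symm)) g

end Aux

theorem strongProd_hull_slice {α β : Type*} [Fintype α] [Fintype β]
    (G : SimpleGraph α) (H : SimpleGraph β) (hG : G.Connected) (hH : H.Connected)
    (hext : ∀ v : α, ¬ IsSimplicial G v) :
    (∀ (S : Set α) (x : β), IsHullSet G S →
        IsHullSet (strongProd G H) (S ×ˢ ({x} : Set β))) ∧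
      hullNumber (strongProd G H) ≤ hullNumber G := by
  classical
  have main : ∀ (S : Set α) (x : β), IsHullSet G S →
      IsHullSet (strongProd G H) (S ×ˢ ({x} : Set β)) := by
    intro S x hS
    obtain ⟨r, hr⟩ := hS
    refine ⟨r + Fintype.card β, ?_⟩
    apply Set.eq_univ_of_univ_subset
    rintro ⟨g, h⟩ -
    -- after r steps we have the full slice at x
    have step1 : (Set.univ ×ˢ ({x} : Set β) : Set (α × β)) ⊆
        (intervalSet (strongProd G H))^[r] (S ×ˢ ({x} : Set β)) := by
      rw [← hr]
      exact slice_subset_iterate hG hH S x r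
    have hdist : H.dist x h ≤ Fintype.card β := by
      obtain ⟨p⟩ := hH.preconnected x h
      have h1 := SimpleGraph.dist_le p.bypass
      have h2 := p.bypass_isPath.length_lt
      omega
    have step2 := spread_iterate hG hH hext x (Fintype.card β) h hdist g
    rw [Nat.add_comm, Function.iterate_add_apply]
    exact iterate_intervalSet_mono step1 (Fintype.card β) step2
  refine ⟨main, ?_⟩
  obtain ⟨x⟩ := hH.nonempty
  have hne : {n : ℕ | ∃ S : Set α, S.ncard = n ∧ IsHullSet G S}.Nonempty :=
    ⟨(Set.univ : Set α).ncard, Set.univ, rfl, ⟨0, rfl⟩⟩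
  obtain ⟨S, hScard, hShull⟩ := Nat.sInf_mem hne
  have hcard : (S ×ˢ ({x} : Set β)).ncard = S.ncard := by
    have : S ×ˢ ({x} : Set β) = (fun g => (g, x)) '' S := by
      ext ⟨a, b⟩
      simp [Set.mem_prod, eq_comm, and_comm]
    rw [this, Set.ncard_image_of_injective]
    intro a b hab
    exact (Prod.ext_iff.mp hab).1
  exact Nat.sInf_le ⟨S ×ˢ ({x} : Set β), by rw [hcard, hScard]; rfl, main S x hShull⟩
end

section
/- A vertex (g,h) of G ⊠ H is simplicial if and only if g is a simplicial vertex of G and h is a simplicial vertex of H; that is, Ext(G ⊠ H) = Ext(G) × Ext(H). -/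
open SimpleGraph

theorem strongProd_simplicial_iff {α β : Type*} [Fintype α] [Fintype β]
    (G : SimpleGraph α) (H : SimpleGraph β) (hG : G.Connected) (hH : H.Connected) :
    ∀ (g : α) (h : β),
      IsSimplicial (strongProd G H) (g, h) ↔ IsSimplicial G g ∧ IsSimplicial H h := by
  intro g h
  constructor
  · intro hs
    constructor
    · intro a b ha hb hab
      have := hs (a := (a, h)) (b := (b, h))
        ⟨by simp [G.ne_of_adj ha], Or.inr ha, Or.inl rfl⟩
        ⟨by simp [G.ne_of_adj hb], Or.inr hb, Or.inl rfl⟩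
        (by simp [hab])
      rcases this.2.1 with h1 | h1
      · exact absurd h1 hab
      · exact h1
    · intro a b ha hb hab
      have := hs (a := (g, a)) (b := (g, b))
        ⟨by simp [H.ne_of_adj ha], Or.inl rfl, Or.inr ha⟩
        ⟨by simp [H.ne_of_adj hb], Or.inl rfl, Or.inr hb⟩
        (by simp [hab])
      rcases this.2.2 with h1 | h1
      · exact absurd h1 hab
      · exact h1
  · rintro ⟨hg, hh⟩ ⟨a1, a2⟩ ⟨b1, b2⟩ ⟨-, ha1, ha2⟩ ⟨-, hb1, hb2⟩ hab
    refine ⟨hab, ?_, ?_⟩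
    · rcases ha1 with ha1 | ha1 <;> rcases hb1 with hb1 | hb1
      · exact Or.inl (ha1 ▸ hb1)
      · exact Or.inr (ha1 ▸ hb1)
      · exact Or.inr (hb1 ▸ ha1.symm)
      · by_cases he : a1 = b1
        · exact Or.inl he
        · exact Or.inr (hg ha1 hb1 he)
    · rcases ha2 with ha2 | ha2 <;> rcases hb2 with hb2 | hb2
      · exact Or.inl (ha2 ▸ hb2)
      · exact Or.inr (ha2 ▸ hb2)
      · exact Or.inr (hb2 ▸ ha2.symm)
      · by_cases he : a2 = b2
        · exact Or.inl he
        · exact Or.inr (hh ha2 hb2 he)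
end

section
/- Let H = C_{2h+1} be an odd cycle with h ≥ 2, and let S be a set of vertices of H with 2 ≤ |S| ≤ 4. Then there exist two distinct vertices x, y ∈ S such that x ∉ I[S∖{x}] and y ∉ I[S∖{y}]. -/
open SimpleGraph

open Fin.CommRing

section base
variable {m : ℕ} [NeZero m]

lemma fin_add_rel (hm : 1 ≤ m) (X Y : Fin m) :
    (X + Y).val = X.val + Y.val ∨ (X + Y).val + m = X.val + Y.val := by
  have h1 : (X + Y).val = (X.val + Y.val) % m := Fin.val_add X Y
  rcases Nat.lt_or_ge (X.val + Y.val) m with hlt | hge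
  · left; rw [h1, Nat.mod_eq_of_lt hlt]
  · right; rw [h1, Nat.mod_eq_sub_mod hge, Nat.mod_eq_of_lt (by omega)]
    omega

lemma fin_sub_rel (hm : 1 ≤ m) (X Y : Fin m) :
    (X - Y).val + Y.val = X.val ∨ (X - Y).val + Y.val = X.val + m := by
  have := fin_add_rel hm (X - Y) Y
  rw [sub_add_cancel] at this
  omega

lemma fin_neg_rel (hm : 1 ≤ m) (X : Fin m) :
    X.val + (-X).val = 0 ∨ X.val + (-X).val = m := by
  have h := fin_add_rel hm X (-X)
  rw [add_neg_cancel] at h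
  simp only [Fin.val_zero] at h
  omega

lemma min_step (hm : 2 ≤ m) (A : Fin m) :
    min (A + 1).val (-(A + 1)).val ≤ min A.val (-A).val + 1 := by
  have h1 := fin_add_rel (by omega) A 1
  have hv1 : ((1 : Fin m) : ℕ) = 1 := by
    rw [Fin.val_one' m]; exact Nat.mod_eq_of_lt (by omega)
  rw [hv1] at h1
  have h2 := fin_neg_rel (by omega) A
  have h3 := fin_neg_rel (by omega) (A + 1)
  have b1 := A.isLt
  have b2 := (A + 1).isLt
  have b3 := (-A).isLt
  have b4 := (-(A + 1)).isLt
  omega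

lemma walk_lb (hm : 2 ≤ m) {u v : Fin m} (p : (cycleGraph m).Walk u v) :
    min (v - u).val (u - v).val ≤ p.length := by
  induction p with
  | nil => simp
  | @cons u w v huw q ih =>
    rw [cycleGraph_adj'] at huw
    have hv1 : ((1 : Fin m) : ℕ) = 1 := by
      rw [Fin.val_one' m]; exact Nat.mod_eq_of_lt (by omega)
    rcases huw with h1 | h1
    · have hw : u - w = 1 := Fin.val_injective (by rw [h1, hv1])
      have hvu : v - u = -((w - v) + 1) := by
        rw [← hw]; ring
      have huv : u - v = (w - v) + 1 := by
        rw [← hw]; ring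
      have := min_step hm (w - v)
      have hwv : -(w - v) = v - w := by ring
      rw [hwv] at this
      rw [hvu, huv, Walk.length_cons]
      omega
    · have hw : w - u = 1 := Fin.val_injective (by rw [h1, hv1])
      have hvu : v - u = (v - w) + 1 := by
        rw [← hw]; ring
      have huv : u - v = -((v - w) + 1) := by
        rw [← hw]; ring
      have := min_step hm (v - w)
      have hwv : -(v - w) = w - v := by ring
      rw [hwv] at this
      rw [hvu, huv, Walk.length_cons]
      omega

lemma cyc_connected (hm : 1 ≤ m) : (cycleGraph m).Connected := by
  obtain ⟨k, rfl⟩ : ∃ k, m = k + 1 := ⟨m - 1, by omega⟩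
  exact cycleGraph_connected

lemma dist_ub (hm : 2 ≤ m) (u : Fin m) (k : ℕ) :
    (cycleGraph m).dist u (u + (k : Fin m)) ≤ k := by
  induction k with
  | zero => simp
  | succ k ih =>
    have hadj : (cycleGraph m).Adj (u + (k : Fin m)) (u + ((k + 1 : ℕ) : Fin m)) := by
      rw [cycleGraph_adj']
      right
      have h9 : u + ((k + 1 : ℕ) : Fin m) - (u + (k : Fin m)) = 1 := by
        push_cast; ring
      rw [h9, Fin.val_one' m]
      exact Nat.mod_eq_of_lt (by omega)
    calc (cycleGraph m).dist u (u + ((k + 1 : ℕ) : Fin m))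
        ≤ (cycleGraph m).dist u (u + (k : Fin m)) +
          (cycleGraph m).dist (u + (k : Fin m)) (u + ((k + 1 : ℕ) : Fin m)) :=
          (cyc_connected (by omega)).dist_triangle
      _ ≤ k + 1 := by
          have := SimpleGraph.dist_le (Walk.cons hadj Walk.nil)
          simp only [Walk.length_cons, Walk.length_nil] at this
          omega

theorem cyc_dist (hm : 2 ≤ m) (u v : Fin m) :
    (cycleGraph m).dist u v = min (v - u).val (u - v).val := by
  apply le_antisymm
  · apply le_min
    · have h1 : v = u + (((v - u).val : ℕ) : Fin m) := by
        rw [Fin.cast_val_eq_self]; ring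
      nth_rewrite 1 [h1]
      exact dist_ub hm u _
    · have h1 : u = v + (((u - v).val : ℕ) : Fin m) := by
        rw [Fin.cast_val_eq_self]; ring
      rw [SimpleGraph.dist_comm]
      nth_rewrite 1 [h1]
      exact dist_ub hm v _
  · obtain ⟨p, hp⟩ := (cycleGraph_preconnected u v).exists_walk_length_eq_dist
    exact hp ▸ walk_lb hm p

end base

section arc
variable {h : ℕ}

lemma fin_sub_add {m : ℕ} [NeZero m] {X Y : Fin m} (hne : X ≠ Y) :
    (X - Y).val + (Y - X).val = m := by
  have h1 := fin_neg_rel (m := m) (Nat.one_le_iff_ne_zero.2 (NeZero.ne m)) (X - Y)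
  have h2 : -(X - Y) = Y - X := by ring
  rw [h2] at h1
  have h3 : X - Y ≠ 0 := sub_ne_zero.2 hne
  have h4 : (X - Y).val ≠ 0 := by
    exact fun e => h3 (Fin.ext (by rw [e, Fin.val_zero]))
  omega

lemma covered_arc (hh : 2 ≤ h) (u x v : Fin (2 * h + 1)) (hux : u ≠ x) (hvx : v ≠ x)
    (hc : (cycleGraph (2 * h + 1)).dist u x + (cycleGraph (2 * h + 1)).dist x v
      = (cycleGraph (2 * h + 1)).dist u v) :
    (x - u).val + (v - x).val ≤ h ∨ (u - x).val + (x - v).val ≤ h := by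
  have : NeZero (2 * h + 1) := ⟨by omega⟩
  have hm : 2 ≤ 2 * h + 1 := by omega
  rw [cyc_dist hm, cyc_dist hm, cyc_dist hm] at hc
  by_cases huv : u = v
  · subst huv
    have e1 := fin_sub_add (Ne.symm hux)
    have e2 : (u - u).val = 0 := by simp
    omega
  · have e1 := fin_sub_add (Ne.symm hux)
    have e2 := fin_sub_add (hvx)
    have e3 := fin_sub_add (Ne.symm huv)
    have e4 : v - u = (x - u) + (v - x) := by ring
    have e5 := fin_add_rel (by omega) (x - u) (v - x)
    rw [← e4] at e5
    omega

end arc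

lemma mem_unfold {m : ℕ} {x : Fin m} {A : Set (Fin m)}
    (hx : x ∈ intervalSet (cycleGraph m) A) :
    ∃ u ∈ A, ∃ v ∈ A, (cycleGraph m).dist u x + (cycleGraph m).dist x v
      = (cycleGraph m).dist u v := by
  simpa [intervalSet, interval] using hx

lemma arc4_1 {h : ℕ} (hh : 2 ≤ h) (s1 s2 s3 s4 : Fin (2 * h + 1))
    (o1 : s1.val < s2.val) (o2 : s2.val < s3.val) (o3 : s3.val < s4.val)
    {u v : Fin (2 * h + 1)}
    (hu : u = s1 ∨ u = s2 ∨ u = s3 ∨ u = s4) (hv : v = s1 ∨ v = s2 ∨ v = s3 ∨ v = s4)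
    (hux : u ≠ s1) (hvx : v ≠ s1)
    (hc : (cycleGraph (2 * h + 1)).dist u s1 + (cycleGraph (2 * h + 1)).dist s1 v
      = (cycleGraph (2 * h + 1)).dist u v) :
    2 * h + 1 + s2.val ≤ h + s4.val := by
  have : NeZero (2 * h + 1) := ⟨by omega⟩
  have harc := covered_arc hh u s1 v hux hvx hc
  have R12 := fin_sub_rel (m := 2 * h + 1) (by omega) s1 s2
  have B12 := (s1 - s2).isLt
  have R13 := fin_sub_rel (m := 2 * h + 1) (by omega) s1 s3
  have B13 := (s1 - s3).isLt
  have R14 := fin_sub_rel (m := 2 * h + 1) (by omega) s1 s4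
  have B14 := (s1 - s4).isLt
  have R21 := fin_sub_rel (m := 2 * h + 1) (by omega) s2 s1
  have B21 := (s2 - s1).isLt
  have R23 := fin_sub_rel (m := 2 * h + 1) (by omega) s2 s3
  have B23 := (s2 - s3).isLt
  have R24 := fin_sub_rel (m := 2 * h + 1) (by omega) s2 s4
  have B24 := (s2 - s4).isLt
  have R31 := fin_sub_rel (m := 2 * h + 1) (by omega) s3 s1
  have B31 := (s3 - s1).isLt
  have R32 := fin_sub_rel (m := 2 * h + 1) (by omega) s3 s2
  have B32 := (s3 - s2).isLt
  have R34 := fin_sub_rel (m := 2 * h + 1) (by omega) s3 s4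
  have B34 := (s3 - s4).isLt
  have R41 := fin_sub_rel (m := 2 * h + 1) (by omega) s4 s1
  have B41 := (s4 - s1).isLt
  have R42 := fin_sub_rel (m := 2 * h + 1) (by omega) s4 s2
  have B42 := (s4 - s2).isLt
  have R43 := fin_sub_rel (m := 2 * h + 1) (by omega) s4 s3
  have B43 := (s4 - s3).isLt
  have L1 := s1.isLt
  have L2 := s2.isLt
  have L3 := s3.isLt
  have L4 := s4.isLt
  rcases hu with rfl|rfl|rfl|rfl <;> rcases hv with rfl|rfl|rfl|rfl <;>
    first
      | exact absurd rfl hux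
      | exact absurd rfl hvx
      | (rcases harc with hA | hA <;> omega)

lemma arc4_2 {h : ℕ} (hh : 2 ≤ h) (s1 s2 s3 s4 : Fin (2 * h + 1))
    (o1 : s1.val < s2.val) (o2 : s2.val < s3.val) (o3 : s3.val < s4.val)
    {u v : Fin (2 * h + 1)}
    (hu : u = s1 ∨ u = s2 ∨ u = s3 ∨ u = s4) (hv : v = s1 ∨ v = s2 ∨ v = s3 ∨ v = s4)
    (hux : u ≠ s2) (hvx : v ≠ s2)
    (hc : (cycleGraph (2 * h + 1)).dist u s2 + (cycleGraph (2 * h + 1)).dist s2 v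
      = (cycleGraph (2 * h + 1)).dist u v) :
    s3.val ≤ h + s1.val := by
  have : NeZero (2 * h + 1) := ⟨by omega⟩
  have harc := covered_arc hh u s2 v hux hvx hc
  have R12 := fin_sub_rel (m := 2 * h + 1) (by omega) s1 s2
  have B12 := (s1 - s2).isLt
  have R13 := fin_sub_rel (m := 2 * h + 1) (by omega) s1 s3
  have B13 := (s1 - s3).isLt
  have R14 := fin_sub_rel (m := 2 * h + 1) (by omega) s1 s4
  have B14 := (s1 - s4).isLt
  have R21 := fin_sub_rel (m := 2 * h + 1) (by omega) s2 s1
  have B21 := (s2 - s1).isLt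
  have R23 := fin_sub_rel (m := 2 * h + 1) (by omega) s2 s3
  have B23 := (s2 - s3).isLt
  have R24 := fin_sub_rel (m := 2 * h + 1) (by omega) s2 s4
  have B24 := (s2 - s4).isLt
  have R31 := fin_sub_rel (m := 2 * h + 1) (by omega) s3 s1
  have B31 := (s3 - s1).isLt
  have R32 := fin_sub_rel (m := 2 * h + 1) (by omega) s3 s2
  have B32 := (s3 - s2).isLt
  have R34 := fin_sub_rel (m := 2 * h + 1) (by omega) s3 s4
  have B34 := (s3 - s4).isLt
  have R41 := fin_sub_rel (m := 2 * h + 1) (by omega) s4 s1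
  have B41 := (s4 - s1).isLt
  have R42 := fin_sub_rel (m := 2 * h + 1) (by omega) s4 s2
  have B42 := (s4 - s2).isLt
  have R43 := fin_sub_rel (m := 2 * h + 1) (by omega) s4 s3
  have B43 := (s4 - s3).isLt
  have L1 := s1.isLt
  have L2 := s2.isLt
  have L3 := s3.isLt
  have L4 := s4.isLt
  rcases hu with rfl|rfl|rfl|rfl <;> rcases hv with rfl|rfl|rfl|rfl <;>
    first
      | exact absurd rfl hux
      | exact absurd rfl hvx
      | (rcases harc with hA | hA <;> omega)

lemma arc4_3 {h : ℕ} (hh : 2 ≤ h) (s1 s2 s3 s4 : Fin (2 * h + 1))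
    (o1 : s1.val < s2.val) (o2 : s2.val < s3.val) (o3 : s3.val < s4.val)
    {u v : Fin (2 * h + 1)}
    (hu : u = s1 ∨ u = s2 ∨ u = s3 ∨ u = s4) (hv : v = s1 ∨ v = s2 ∨ v = s3 ∨ v = s4)
    (hux : u ≠ s3) (hvx : v ≠ s3)
    (hc : (cycleGraph (2 * h + 1)).dist u s3 + (cycleGraph (2 * h + 1)).dist s3 v
      = (cycleGraph (2 * h + 1)).dist u v) :
    s4.val ≤ h + s2.val := by
  have : NeZero (2 * h + 1) := ⟨by omega⟩
  have harc := covered_arc hh u s3 v hux hvx hc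
  have R12 := fin_sub_rel (m := 2 * h + 1) (by omega) s1 s2
  have B12 := (s1 - s2).isLt
  have R13 := fin_sub_rel (m := 2 * h + 1) (by omega) s1 s3
  have B13 := (s1 - s3).isLt
  have R14 := fin_sub_rel (m := 2 * h + 1) (by omega) s1 s4
  have B14 := (s1 - s4).isLt
  have R21 := fin_sub_rel (m := 2 * h + 1) (by omega) s2 s1
  have B21 := (s2 - s1).isLt
  have R23 := fin_sub_rel (m := 2 * h + 1) (by omega) s2 s3
  have B23 := (s2 - s3).isLt
  have R24 := fin_sub_rel (m := 2 * h + 1) (by omega) s2 s4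
  have B24 := (s2 - s4).isLt
  have R31 := fin_sub_rel (m := 2 * h + 1) (by omega) s3 s1
  have B31 := (s3 - s1).isLt
  have R32 := fin_sub_rel (m := 2 * h + 1) (by omega) s3 s2
  have B32 := (s3 - s2).isLt
  have R34 := fin_sub_rel (m := 2 * h + 1) (by omega) s3 s4
  have B34 := (s3 - s4).isLt
  have R41 := fin_sub_rel (m := 2 * h + 1) (by omega) s4 s1
  have B41 := (s4 - s1).isLt
  have R42 := fin_sub_rel (m := 2 * h + 1) (by omega) s4 s2
  have B42 := (s4 - s2).isLt
  have R43 := fin_sub_rel (m := 2 * h + 1) (by omega) s4 s3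
  have B43 := (s4 - s3).isLt
  have L1 := s1.isLt
  have L2 := s2.isLt
  have L3 := s3.isLt
  have L4 := s4.isLt
  rcases hu with rfl|rfl|rfl|rfl <;> rcases hv with rfl|rfl|rfl|rfl <;>
    first
      | exact absurd rfl hux
      | exact absurd rfl hvx
      | (rcases harc with hA | hA <;> omega)

lemma arc4_4 {h : ℕ} (hh : 2 ≤ h) (s1 s2 s3 s4 : Fin (2 * h + 1))
    (o1 : s1.val < s2.val) (o2 : s2.val < s3.val) (o3 : s3.val < s4.val)
    {u v : Fin (2 * h + 1)}
    (hu : u = s1 ∨ u = s2 ∨ u = s3 ∨ u = s4) (hv : v = s1 ∨ v = s2 ∨ v = s3 ∨ v = s4)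
    (hux : u ≠ s4) (hvx : v ≠ s4)
    (hc : (cycleGraph (2 * h + 1)).dist u s4 + (cycleGraph (2 * h + 1)).dist s4 v
      = (cycleGraph (2 * h + 1)).dist u v) :
    2 * h + 1 + s1.val ≤ h + s3.val := by
  have : NeZero (2 * h + 1) := ⟨by omega⟩
  have harc := covered_arc hh u s4 v hux hvx hc
  have R12 := fin_sub_rel (m := 2 * h + 1) (by omega) s1 s2
  have B12 := (s1 - s2).isLt
  have R13 := fin_sub_rel (m := 2 * h + 1) (by omega) s1 s3
  have B13 := (s1 - s3).isLt
  have R14 := fin_sub_rel (m := 2 * h + 1) (by omega) s1 s4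
  have B14 := (s1 - s4).isLt
  have R21 := fin_sub_rel (m := 2 * h + 1) (by omega) s2 s1
  have B21 := (s2 - s1).isLt
  have R23 := fin_sub_rel (m := 2 * h + 1) (by omega) s2 s3
  have B23 := (s2 - s3).isLt
  have R24 := fin_sub_rel (m := 2 * h + 1) (by omega) s2 s4
  have B24 := (s2 - s4).isLt
  have R31 := fin_sub_rel (m := 2 * h + 1) (by omega) s3 s1
  have B31 := (s3 - s1).isLt
  have R32 := fin_sub_rel (m := 2 * h + 1) (by omega) s3 s2
  have B32 := (s3 - s2).isLt
  have R34 := fin_sub_rel (m := 2 * h + 1) (by omega) s3 s4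
  have B34 := (s3 - s4).isLt
  have R41 := fin_sub_rel (m := 2 * h + 1) (by omega) s4 s1
  have B41 := (s4 - s1).isLt
  have R42 := fin_sub_rel (m := 2 * h + 1) (by omega) s4 s2
  have B42 := (s4 - s2).isLt
  have R43 := fin_sub_rel (m := 2 * h + 1) (by omega) s4 s3
  have B43 := (s4 - s3).isLt
  have L1 := s1.isLt
  have L2 := s2.isLt
  have L3 := s3.isLt
  have L4 := s4.isLt
  rcases hu with rfl|rfl|rfl|rfl <;> rcases hv with rfl|rfl|rfl|rfl <;>
    first
      | exact absurd rfl hux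
      | exact absurd rfl hvx
      | (rcases harc with hA | hA <;> omega)

lemma arc3_1 {h : ℕ} (hh : 2 ≤ h) (s1 s2 s3 : Fin (2 * h + 1))
    (o1 : s1.val < s2.val) (o2 : s2.val < s3.val)
    {u v : Fin (2 * h + 1)}
    (hu : u = s1 ∨ u = s2 ∨ u = s3) (hv : v = s1 ∨ v = s2 ∨ v = s3)
    (hux : u ≠ s1) (hvx : v ≠ s1)
    (hc : (cycleGraph (2 * h + 1)).dist u s1 + (cycleGraph (2 * h + 1)).dist s1 v
      = (cycleGraph (2 * h + 1)).dist u v) :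
    2 * h + 1 + s2.val ≤ h + s3.val := by
  have : NeZero (2 * h + 1) := ⟨by omega⟩
  have harc := covered_arc hh u s1 v hux hvx hc
  have R12 := fin_sub_rel (m := 2 * h + 1) (by omega) s1 s2
  have B12 := (s1 - s2).isLt
  have R13 := fin_sub_rel (m := 2 * h + 1) (by omega) s1 s3
  have B13 := (s1 - s3).isLt
  have R21 := fin_sub_rel (m := 2 * h + 1) (by omega) s2 s1
  have B21 := (s2 - s1).isLt
  have R23 := fin_sub_rel (m := 2 * h + 1) (by omega) s2 s3
  have B23 := (s2 - s3).isLt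
  have R31 := fin_sub_rel (m := 2 * h + 1) (by omega) s3 s1
  have B31 := (s3 - s1).isLt
  have R32 := fin_sub_rel (m := 2 * h + 1) (by omega) s3 s2
  have B32 := (s3 - s2).isLt
  have L1 := s1.isLt
  have L2 := s2.isLt
  have L3 := s3.isLt
  rcases hu with rfl|rfl|rfl <;> rcases hv with rfl|rfl|rfl <;>
    first
      | exact absurd rfl hux
      | exact absurd rfl hvx
      | (rcases harc with hA | hA <;> omega)

lemma arc3_2 {h : ℕ} (hh : 2 ≤ h) (s1 s2 s3 : Fin (2 * h + 1))
    (o1 : s1.val < s2.val) (o2 : s2.val < s3.val)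
    {u v : Fin (2 * h + 1)}
    (hu : u = s1 ∨ u = s2 ∨ u = s3) (hv : v = s1 ∨ v = s2 ∨ v = s3)
    (hux : u ≠ s2) (hvx : v ≠ s2)
    (hc : (cycleGraph (2 * h + 1)).dist u s2 + (cycleGraph (2 * h + 1)).dist s2 v
      = (cycleGraph (2 * h + 1)).dist u v) :
    s3.val ≤ h + s1.val := by
  have : NeZero (2 * h + 1) := ⟨by omega⟩
  have harc := covered_arc hh u s2 v hux hvx hc
  have R12 := fin_sub_rel (m := 2 * h + 1) (by omega) s1 s2
  have B12 := (s1 - s2).isLt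
  have R13 := fin_sub_rel (m := 2 * h + 1) (by omega) s1 s3
  have B13 := (s1 - s3).isLt
  have R21 := fin_sub_rel (m := 2 * h + 1) (by omega) s2 s1
  have B21 := (s2 - s1).isLt
  have R23 := fin_sub_rel (m := 2 * h + 1) (by omega) s2 s3
  have B23 := (s2 - s3).isLt
  have R31 := fin_sub_rel (m := 2 * h + 1) (by omega) s3 s1
  have B31 := (s3 - s1).isLt
  have R32 := fin_sub_rel (m := 2 * h + 1) (by omega) s3 s2
  have B32 := (s3 - s2).isLt
  have L1 := s1.isLt
  have L2 := s2.isLt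
  have L3 := s3.isLt
  rcases hu with rfl|rfl|rfl <;> rcases hv with rfl|rfl|rfl <;>
    first
      | exact absurd rfl hux
      | exact absurd rfl hvx
      | (rcases harc with hA | hA <;> omega)

lemma arc3_3 {h : ℕ} (hh : 2 ≤ h) (s1 s2 s3 : Fin (2 * h + 1))
    (o1 : s1.val < s2.val) (o2 : s2.val < s3.val)
    {u v : Fin (2 * h + 1)}
    (hu : u = s1 ∨ u = s2 ∨ u = s3) (hv : v = s1 ∨ v = s2 ∨ v = s3)
    (hux : u ≠ s3) (hvx : v ≠ s3)
    (hc : (cycleGraph (2 * h + 1)).dist u s3 + (cycleGraph (2 * h + 1)).dist s3 v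
      = (cycleGraph (2 * h + 1)).dist u v) :
    2 * h + 1 + s1.val ≤ h + s2.val := by
  have : NeZero (2 * h + 1) := ⟨by omega⟩
  have harc := covered_arc hh u s3 v hux hvx hc
  have R12 := fin_sub_rel (m := 2 * h + 1) (by omega) s1 s2
  have B12 := (s1 - s2).isLt
  have R13 := fin_sub_rel (m := 2 * h + 1) (by omega) s1 s3
  have B13 := (s1 - s3).isLt
  have R21 := fin_sub_rel (m := 2 * h + 1) (by omega) s2 s1
  have B21 := (s2 - s1).isLt
  have R23 := fin_sub_rel (m := 2 * h + 1) (by omega) s2 s3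
  have B23 := (s2 - s3).isLt
  have R31 := fin_sub_rel (m := 2 * h + 1) (by omega) s3 s1
  have B31 := (s3 - s1).isLt
  have R32 := fin_sub_rel (m := 2 * h + 1) (by omega) s3 s2
  have B32 := (s3 - s2).isLt
  have L1 := s1.isLt
  have L2 := s2.isLt
  have L3 := s3.isLt
  rcases hu with rfl|rfl|rfl <;> rcases hv with rfl|rfl|rfl <;>
    first
      | exact absurd rfl hux
      | exact absurd rfl hvx
      | (rcases harc with hA | hA <;> omega)

lemma sort3 {m : ℕ} (a b c : Fin m) (hab : a ≠ b) (hac : a ≠ c) (hbc : b ≠ c) :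
    ∃ p1 p2 p3 : Fin m, (p1.val < p2.val ∧ p2.val < p3.val) ∧
      ({p1, p2, p3} : Set (Fin m)) = {a, b, c} := by
  have vab : a.val ≠ b.val := fun e => hab (Fin.val_injective e)
  have vac : a.val ≠ c.val := fun e => hac (Fin.val_injective e)
  have vbc : b.val ≠ c.val := fun e => hbc (Fin.val_injective e)
  rcases lt_or_gt_of_ne vab with _ | _ <;> rcases lt_or_gt_of_ne vac with _ | _ <;> rcases lt_or_gt_of_ne vbc with _ | _ <;>
    first
      | exact ⟨a, b, c, ⟨by omega, by omega⟩, rfl⟩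
      | exact ⟨a, c, b, ⟨by omega, by omega⟩, by ext x; simp [Set.mem_insert_iff]; tauto⟩
      | exact ⟨b, a, c, ⟨by omega, by omega⟩, by ext x; simp [Set.mem_insert_iff]; tauto⟩
      | exact ⟨b, c, a, ⟨by omega, by omega⟩, by ext x; simp [Set.mem_insert_iff]; tauto⟩
      | exact ⟨c, a, b, ⟨by omega, by omega⟩, by ext x; simp [Set.mem_insert_iff]; tauto⟩
      | exact ⟨c, b, a, ⟨by omega, by omega⟩, by ext x; simp [Set.mem_insert_iff]; tauto⟩
      | (exfalso; omega)

set_option maxHeartbeats 1000000 in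
lemma sort4 {m : ℕ} (a b c d : Fin m) (hab : a ≠ b) (hac : a ≠ c) (had : a ≠ d)
    (hbc : b ≠ c) (hbd : b ≠ d) (hcd : c ≠ d) :
    ∃ p1 p2 p3 p4 : Fin m, (p1.val < p2.val ∧ p2.val < p3.val ∧ p3.val < p4.val) ∧
      ({p1, p2, p3, p4} : Set (Fin m)) = {a, b, c, d} := by
  obtain ⟨p, q, r, ⟨hpq, hqr⟩, hset⟩ := sort3 b c d hbc hbd hcd
  have key : ∀ x ∈ ({p, q, r} : Set (Fin m)), a ≠ x := by
    intro x hx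
    rw [hset] at hx
    rcases hx with rfl | rfl | rfl
    exacts [hab, hac, had]
  have hap : a.val ≠ p.val := fun e => key p (by simp) (Fin.val_injective e)
  have haq : a.val ≠ q.val := fun e => key q (by simp) (Fin.val_injective e)
  have har : a.val ≠ r.val := fun e => key r (by simp) (Fin.val_injective e)
  have hmem : ∀ x : Fin m, x ∈ ({p, q, r} : Set (Fin m)) ↔ x ∈ ({b, c, d} : Set (Fin m)) :=
    fun x => Set.ext_iff.1 hset x
  rcases Nat.lt_or_ge a.val p.val with h1 | h1
  · refine ⟨a, p, q, r, ⟨h1, hpq, hqr⟩, ?_⟩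
    ext x
    have h9 := hmem x
    simp only [Set.mem_insert_iff, Set.mem_singleton_iff] at h9 ⊢
    tauto
  · rcases Nat.lt_or_ge a.val q.val with h2 | h2
    · refine ⟨p, a, q, r, ⟨by omega, h2, hqr⟩, ?_⟩
      ext x
      have h9 := hmem x
      simp only [Set.mem_insert_iff, Set.mem_singleton_iff] at h9 ⊢
      tauto
    · rcases Nat.lt_or_ge a.val r.val with h3 | h3
      · refine ⟨p, q, a, r, ⟨hpq, by omega, h3⟩, ?_⟩
        ext x
        have h9 := hmem x
        simp only [Set.mem_insert_iff, Set.mem_singleton_iff] at h9 ⊢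
        tauto
      · refine ⟨p, q, r, a, ⟨hpq, hqr, by omega⟩, ?_⟩
        ext x
        have h9 := hmem x
        simp only [Set.mem_insert_iff, Set.mem_singleton_iff] at h9 ⊢
        tauto

section cores
variable {h : ℕ}

lemma core2 (hh : 2 ≤ h) (s1 s2 : Fin (2 * h + 1)) (hne : s1 ≠ s2) :
    ∃ x ∈ ({s1, s2} : Set (Fin (2 * h + 1))), ∃ y ∈ ({s1, s2} : Set (Fin (2 * h + 1))),
      x ≠ y ∧
      x ∉ intervalSet (cycleGraph (2 * h + 1)) (({s1, s2} : Set (Fin (2 * h + 1))) \ {x}) ∧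
      y ∉ intervalSet (cycleGraph (2 * h + 1)) (({s1, s2} : Set (Fin (2 * h + 1))) \ {y}) := by
  have : NeZero (2 * h + 1) := ⟨by omega⟩
  have hm : 2 ≤ 2 * h + 1 := by omega
  have gen : ∀ a b : Fin (2 * h + 1), a ≠ b →
      ¬((cycleGraph (2 * h + 1)).dist b a + (cycleGraph (2 * h + 1)).dist a b
        = (cycleGraph (2 * h + 1)).dist b b) := by
    intro a b hab heq
    rw [cyc_dist hm, cyc_dist hm, cyc_dist hm] at heq
    have e1 := fin_sub_add hab
    have e2 : b - b = 0 := sub_self b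
    rw [e2] at heq
    simp only [Fin.val_zero] at heq
    omega
  refine ⟨s1, by simp, s2, by simp, hne, fun hcov => ?_, fun hcov => ?_⟩
  · obtain ⟨u, hu, v, hv, heq⟩ := mem_unfold hcov
    simp only [Set.mem_diff, Set.mem_insert_iff, Set.mem_singleton_iff] at hu hv
    have hu2 : u = s2 := by tauto
    have hv2 : v = s2 := by tauto
    rw [hu2, hv2] at heq
    exact gen s1 s2 hne heq
  · obtain ⟨u, hu, v, hv, heq⟩ := mem_unfold hcov
    simp only [Set.mem_diff, Set.mem_insert_iff, Set.mem_singleton_iff] at hu hv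
    have hu2 : u = s1 := by tauto
    have hv2 : v = s1 := by tauto
    rw [hu2, hv2] at heq
    exact gen s2 s1 hne.symm heq

lemma core3 (hh : 2 ≤ h) (s1 s2 s3 : Fin (2 * h + 1))
    (o1 : s1.val < s2.val) (o2 : s2.val < s3.val) :
    ∃ x ∈ ({s1, s2, s3} : Set (Fin (2 * h + 1))),
      ∃ y ∈ ({s1, s2, s3} : Set (Fin (2 * h + 1))), x ≠ y ∧
      x ∉ intervalSet (cycleGraph (2 * h + 1)) (({s1, s2, s3} : Set (Fin (2 * h + 1))) \ {x}) ∧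
      y ∉ intervalSet (cycleGraph (2 * h + 1)) (({s1, s2, s3} : Set (Fin (2 * h + 1))) \ {y}) := by
  have hc1 : s1 ∈ intervalSet (cycleGraph (2 * h + 1))
      (({s1, s2, s3} : Set (Fin (2 * h + 1))) \ {s1}) → 2 * h + 1 + s2.val ≤ h + s3.val := by
    intro hcov
    obtain ⟨u, hu, v, hv, heq⟩ := mem_unfold hcov
    simp only [Set.mem_diff, Set.mem_insert_iff, Set.mem_singleton_iff] at hu hv
    exact arc3_1 hh s1 s2 s3 o1 o2 hu.1 hv.1 hu.2 hv.2 heq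
  have hc2 : s2 ∈ intervalSet (cycleGraph (2 * h + 1))
      (({s1, s2, s3} : Set (Fin (2 * h + 1))) \ {s2}) → s3.val ≤ h + s1.val := by
    intro hcov
    obtain ⟨u, hu, v, hv, heq⟩ := mem_unfold hcov
    simp only [Set.mem_diff, Set.mem_insert_iff, Set.mem_singleton_iff] at hu hv
    exact arc3_2 hh s1 s2 s3 o1 o2 hu.1 hv.1 hu.2 hv.2 heq
  have hc3 : s3 ∈ intervalSet (cycleGraph (2 * h + 1))
      (({s1, s2, s3} : Set (Fin (2 * h + 1))) \ {s3}) → 2 * h + 1 + s1.val ≤ h + s2.val := by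
    intro hcov
    obtain ⟨u, hu, v, hv, heq⟩ := mem_unfold hcov
    simp only [Set.mem_diff, Set.mem_insert_iff, Set.mem_singleton_iff] at hu hv
    exact arc3_3 hh s1 s2 s3 o1 o2 hu.1 hv.1 hu.2 hv.2 heq
  have K : (¬(2 * h + 1 + s2.val ≤ h + s3.val) ∧ ¬(s3.val ≤ h + s1.val)) ∨
      (¬(s3.val ≤ h + s1.val) ∧ ¬(2 * h + 1 + s1.val ≤ h + s2.val)) ∨
      (¬(2 * h + 1 + s2.val ≤ h + s3.val) ∧ ¬(2 * h + 1 + s1.val ≤ h + s2.val)) := by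
    omega
  rcases K with ⟨k, l⟩ | ⟨k, l⟩ | ⟨k, l⟩
  · exact ⟨s1, by simp, s2, by simp, Fin.ne_of_val_ne (by omega),
      fun hc => k (hc1 hc), fun hc => l (hc2 hc)⟩
  · exact ⟨s2, by simp, s3, by simp, Fin.ne_of_val_ne (by omega),
      fun hc => k (hc2 hc), fun hc => l (hc3 hc)⟩
  · exact ⟨s1, by simp, s3, by simp, Fin.ne_of_val_ne (by omega),
      fun hc => k (hc1 hc), fun hc => l (hc3 hc)⟩

lemma core4 (hh : 2 ≤ h) (s1 s2 s3 s4 : Fin (2 * h + 1))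
    (o1 : s1.val < s2.val) (o2 : s2.val < s3.val) (o3 : s3.val < s4.val) :
    ∃ x ∈ ({s1, s2, s3, s4} : Set (Fin (2 * h + 1))),
      ∃ y ∈ ({s1, s2, s3, s4} : Set (Fin (2 * h + 1))), x ≠ y ∧
      x ∉ intervalSet (cycleGraph (2 * h + 1)) (({s1, s2, s3, s4} : Set (Fin (2 * h + 1))) \ {x}) ∧
      y ∉ intervalSet (cycleGraph (2 * h + 1)) (({s1, s2, s3, s4} : Set (Fin (2 * h + 1))) \ {y}) := by
  have hc1 : s1 ∈ intervalSet (cycleGraph (2 * h + 1))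
      (({s1, s2, s3, s4} : Set (Fin (2 * h + 1))) \ {s1}) →
      2 * h + 1 + s2.val ≤ h + s4.val := by
    intro hcov
    obtain ⟨u, hu, v, hv, heq⟩ := mem_unfold hcov
    simp only [Set.mem_diff, Set.mem_insert_iff, Set.mem_singleton_iff] at hu hv
    exact arc4_1 hh s1 s2 s3 s4 o1 o2 o3 hu.1 hv.1 hu.2 hv.2 heq
  have hc2 : s2 ∈ intervalSet (cycleGraph (2 * h + 1))
      (({s1, s2, s3, s4} : Set (Fin (2 * h + 1))) \ {s2}) → s3.val ≤ h + s1.val := by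
    intro hcov
    obtain ⟨u, hu, v, hv, heq⟩ := mem_unfold hcov
    simp only [Set.mem_diff, Set.mem_insert_iff, Set.mem_singleton_iff] at hu hv
    exact arc4_2 hh s1 s2 s3 s4 o1 o2 o3 hu.1 hv.1 hu.2 hv.2 heq
  have hc3 : s3 ∈ intervalSet (cycleGraph (2 * h + 1))
      (({s1, s2, s3, s4} : Set (Fin (2 * h + 1))) \ {s3}) → s4.val ≤ h + s2.val := by
    intro hcov
    obtain ⟨u, hu, v, hv, heq⟩ := mem_unfold hcov
    simp only [Set.mem_diff, Set.mem_insert_iff, Set.mem_singleton_iff] at hu hv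
    exact arc4_3 hh s1 s2 s3 s4 o1 o2 o3 hu.1 hv.1 hu.2 hv.2 heq
  have hc4 : s4 ∈ intervalSet (cycleGraph (2 * h + 1))
      (({s1, s2, s3, s4} : Set (Fin (2 * h + 1))) \ {s4}) →
      2 * h + 1 + s1.val ≤ h + s3.val := by
    intro hcov
    obtain ⟨u, hu, v, hv, heq⟩ := mem_unfold hcov
    simp only [Set.mem_diff, Set.mem_insert_iff, Set.mem_singleton_iff] at hu hv
    exact arc4_4 hh s1 s2 s3 s4 o1 o2 o3 hu.1 hv.1 hu.2 hv.2 heq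
  have K1 : ¬(2 * h + 1 + s2.val ≤ h + s4.val) ∨ ¬(s4.val ≤ h + s2.val) := by omega
  have K2 : ¬(s3.val ≤ h + s1.val) ∨ ¬(2 * h + 1 + s1.val ≤ h + s3.val) := by omega
  rcases K1 with k | k <;> rcases K2 with l | l
  · exact ⟨s1, by simp, s2, by simp, Fin.ne_of_val_ne (by omega),
      fun hc => k (hc1 hc), fun hc => l (hc2 hc)⟩
  · exact ⟨s1, by simp, s4, by simp, Fin.ne_of_val_ne (by omega),
      fun hc => k (hc1 hc), fun hc => l (hc4 hc)⟩
  · exact ⟨s3, by simp, s2, by simp, Fin.ne_of_val_ne (by omega),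
      fun hc => k (hc3 hc), fun hc => l (hc2 hc)⟩
  · exact ⟨s3, by simp, s4, by simp, Fin.ne_of_val_ne (by omega),
      fun hc => k (hc3 hc), fun hc => l (hc4 hc)⟩

end cores


theorem oddCycle_condition_B (h : ℕ) (hh : 2 ≤ h)
    (S : Set (Fin (2 * h + 1))) (h2 : 2 ≤ S.ncard) (h4 : S.ncard ≤ 4) :
    ∃ x ∈ S, ∃ y ∈ S, x ≠ y ∧
      x ∉ intervalSet (cycleGraph (2 * h + 1)) (S \ {x}) ∧
      y ∉ intervalSet (cycleGraph (2 * h + 1)) (S \ {y}) := by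
  have hcard : S.ncard = 2 ∨ S.ncard = 3 ∨ S.ncard = 4 := by omega
  rcases hcard with hc | hc | hc
  · obtain ⟨a, b, hab, rfl⟩ := Set.ncard_eq_two.1 hc
    exact core2 hh a b hab
  · obtain ⟨a, b, c, hab, hac, hbc, rfl⟩ := Set.ncard_eq_three.1 hc
    obtain ⟨p, q, r, ⟨h1', h2'⟩, hset⟩ := sort3 a b c hab hac hbc
    rw [← hset]
    exact core3 hh p q r h1' h2'
  · have hfin : S.Finite := Set.toFinite S
    obtain ⟨a, ha⟩ := Set.nonempty_of_ncard_ne_zero (s := S) (by omega)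
    have h3 : (S \ {a}).ncard = 3 := by
      rw [Set.ncard_diff_singleton_of_mem ha]
      omega
    obtain ⟨b, c, d, hbc, hbd, hcd, hdiff⟩ := Set.ncard_eq_three.1 h3
    have hS : S = {a, b, c, d} := by
      rw [show ({a, b, c, d} : Set (Fin (2 * h + 1))) = insert a {b, c, d} from rfl, ← hdiff,
        Set.insert_diff_singleton, Set.insert_eq_self.2 ha]
    have hab : a ≠ b := by
      have hb : b ∈ S \ {a} := by rw [hdiff]; simp
      exact fun e => hb.2 (by simp [e])
    have hac : a ≠ c := by
      have hb : c ∈ S \ {a} := by rw [hdiff]; simp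
      exact fun e => hb.2 (by simp [e])
    have had : a ≠ d := by
      have hb : d ∈ S \ {a} := by rw [hdiff]; simp
      exact fun e => hb.2 (by simp [e])
    subst hS
    obtain ⟨p, q, r, s, ⟨h1', h2', h3'⟩, hset⟩ := sort4 a b c d hab hac had hbc hbd hcd
    rw [← hset]
    exact core4 hh p q r s h1' h2' h3'
end
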